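/- arXiv:1310.7259 — 6 statements merged into one kernel-verified Lean document; each statement's English description precedes it below -/
import Mathlib

section
/- The Moore determinant det((x_i^{q^j})_{0 ≤ i,j ≤ d-1}) of elements x_0,…,x_{d-1} in an algebraically closed field of characteristic p containing F_q is nonzero if and only if x_0,…,x_{d-1} are linearly independent over F_q. -/
open Polynomial Finset

/-- **Moore determinant criterion.**  Let `q = p^n` be a prime power, `K` an algebraically
closed field of characteristic `p` containing `F_q = GaloisField p n`.  The Moore determinant
`det ((x i ^ q ^ j))` of elements `x 0, …, x (d-1)` of `K` is nonzero iff the `x i` are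
linearly independent over `F_q`. -/
theorem moore_det_ne_zero_iff_linearIndependent
    (p n d : ℕ) [Fact p.Prime] (hn : 0 < n)
    (K : Type*) [Field K] [IsAlgClosed K] [CharP K p]
    [Algebra (GaloisField p n) K] (x : Fin d → K) :
    Matrix.det (Matrix.of fun i j : Fin d => x i ^ (p ^ n) ^ (j : ℕ)) ≠ 0 ↔
      LinearIndependent (GaloisField p n) x := by
  classical
  have hp : p.Prime := Fact.out
  haveI : Fintype (GaloisField p n) := Fintype.ofFinite (GaloisField p n)
  haveI : ExpChar K p := ExpChar.prime hp
  have hq1 : 1 < p ^ n := Nat.one_lt_pow hn.ne' hp.one_lt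
  have hcard : Fintype.card (GaloisField p n) = p ^ n := by
    rw [← Nat.card_eq_fintype_card, GaloisField.card p n hn.ne']
  have hfix : ∀ c : GaloisField p n,
      (algebraMap (GaloisField p n) K c) ^ (p ^ n) = algebraMap (GaloisField p n) K c := by
    intro c
    rw [← map_pow, ← hcard, FiniteField.pow_card]
  have hfixj : ∀ (c : GaloisField p n) (j : ℕ),
      (algebraMap (GaloisField p n) K c) ^ ((p ^ n) ^ j) = algebraMap (GaloisField p n) K c := by
    intro c j
    induction j with
    | zero => simp
    | succ j ih => rw [pow_succ, pow_mul, ih, hfix]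
  -- key: F_q-linear combinations commute with q^j-th powers
  have hpow : ∀ (c : Fin d → GaloisField p n) (j : ℕ),
      (∑ i, c i • x i) ^ (p ^ n) ^ j
        = ∑ i, algebraMap (GaloisField p n) K (c i) * x i ^ (p ^ n) ^ j := by
    intro c j
    have h1 : (∑ i, c i • x i) ^ (p ^ n) ^ j
        = iterateFrobenius K p (n * j) (∑ i, c i • x i) := by
      rw [iterateFrobenius_def, pow_mul]
    rw [h1, map_sum]
    refine Finset.sum_congr rfl fun i _ => ?_
    rw [iterateFrobenius_def, pow_mul, Algebra.smul_def, mul_pow, hfixj]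
  constructor
  · -- det ≠ 0 → linear independent
    intro hdet
    rw [Fintype.linearIndependent_iff]
    intro g hg
    by_contra hne
    push_neg at hne
    obtain ⟨i0, hi0⟩ := hne
    apply hdet
    rw [← Matrix.exists_vecMul_eq_zero_iff]
    refine ⟨fun i => algebraMap (GaloisField p n) K (g i), ?_, ?_⟩
    · intro h0
      exact hi0 ((_root_.map_eq_zero _).mp (congrFun h0 i0))
    · funext j
      have := hpow g j
      rw [hg, zero_pow (pow_ne_zero _ (Nat.zero_lt_of_lt hq1).ne')] at this
      simp only [Matrix.vecMul, dotProduct, Matrix.of_apply, Pi.zero_apply]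
      exact (this.symm)
  · -- linear independent → det ≠ 0
    intro hli hdet
    obtain ⟨v, hv0, hv⟩ := Matrix.exists_mulVec_eq_zero_iff.mpr hdet
    obtain ⟨j0, hj0⟩ : ∃ j0, v j0 ≠ 0 := Function.ne_iff.mp hv0
    have hd : 0 < d := j0.pos
    set P : K[X] := ∑ j : Fin d, C (v j) * X ^ ((p ^ n) ^ (j : ℕ)) with hP
    have hPne : P ≠ 0 := by
      intro h
      apply hj0
      have := congrArg (fun Q => Polynomial.coeff Q ((p ^ n) ^ (j0 : ℕ))) h
      simp only [hP, finset_sum_coeff, coeff_C_mul, coeff_X_pow, coeff_zero] at this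
      rw [Finset.sum_eq_single j0] at this
      · simpa using this
      · intro j _ hj
        have hne : (p ^ n) ^ (j0 : ℕ) ≠ (p ^ n) ^ (j : ℕ) := fun h =>
          hj (Fin.ext (Nat.pow_right_injective hq1 h)).symm
        simp [hne]
      · simp
    have hdeg : P.natDegree ≤ (p ^ n) ^ (d - 1) := by
      refine (Polynomial.natDegree_sum_le _ _).trans ?_
      rw [Finset.fold_max_le]
      refine ⟨Nat.zero_le _, fun j _ => ?_⟩
      refine (Polynomial.natDegree_C_mul_le _ _).trans ?_
      rw [Polynomial.natDegree_X_pow]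
      exact Nat.pow_le_pow_right (Nat.zero_lt_of_lt hq1) (Nat.le_sub_one_of_lt j.isLt)
    -- every F_q-combination of the x i is a root of P
    have hroot : ∀ c : Fin d → GaloisField p n, P.IsRoot (∑ i, c i • x i) := by
      intro c
      simp only [IsRoot, hP, eval_finset_sum, eval_mul, eval_C, eval_pow, eval_X]
      have : ∀ j : Fin d, v j * (∑ i, c i • x i) ^ (p ^ n) ^ (j : ℕ)
          = ∑ i, algebraMap (GaloisField p n) K (c i) * (x i ^ (p ^ n) ^ (j : ℕ) * v j) := by
        intro j
        rw [hpow c j, Finset.mul_sum]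
        exact Finset.sum_congr rfl fun i _ => by ring
      rw [Finset.sum_congr rfl fun j _ => this j, Finset.sum_comm]
      refine Finset.sum_eq_zero fun i _ => ?_
      rw [← Finset.mul_sum]
      have h0 : ∑ j : Fin d, x i ^ (p ^ n) ^ (j : ℕ) * v j = 0 := by
        have := congrFun hv i
        simpa [Matrix.mulVec, dotProduct] using this
      rw [h0, mul_zero]
    -- injectivity of the combination map
    have hinj : Function.Injective (fun c : Fin d → GaloisField p n => ∑ i, c i • x i) := by
      intro c c' hcc
      simp only at hcc
      have h2 : ∑ i, (c - c') i • x i = 0 := by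
        simp only [Pi.sub_apply, sub_smul, Finset.sum_sub_distrib, hcc, sub_self]
      have h3 := (Fintype.linearIndependent_iff.mp hli) (c - c') h2
      funext i
      simpa [sub_eq_zero] using h3 i
    have hcardle : (p ^ n) ^ d ≤ P.natDegree := by
      have hsub : (Finset.univ.image fun c : Fin d → GaloisField p n => ∑ i, c i • x i)
          ⊆ P.roots.toFinset := by
        intro y hy
        rw [Finset.mem_image] at hy
        obtain ⟨c, _, rfl⟩ := hy
        rw [Multiset.mem_toFinset, Polynomial.mem_roots hPne]
        exact hroot c
      calc (p ^ n) ^ d = Fintype.card (Fin d → GaloisField p n) := by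
              rw [Fintype.card_fun, hcard, Fintype.card_fin]
        _ = (Finset.univ.image fun c : Fin d → GaloisField p n => ∑ i, c i • x i).card := by
              rw [Finset.card_image_of_injective _ hinj, Finset.card_univ]
        _ ≤ P.roots.toFinset.card := Finset.card_le_card hsub
        _ ≤ Multiset.card P.roots := Multiset.toFinset_card_le _
        _ ≤ P.natDegree := Polynomial.card_roots' P
    have : (p ^ n) ^ d ≤ (p ^ n) ^ (d - 1) := hcardle.trans hdeg
    exact absurd this (not_le.mpr (Nat.pow_lt_pow_right hq1 (Nat.sub_lt hd one_pos)))
end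

section
/- Let δ_d(y_1,…,y_{d-1}) = det(M)^{q-1} where M is the d×d matrix whose rows are (1, y_1, y_1y_2, …, y_1⋯y_{d-1}) raised to the successive q-power Frobenius (row k has entries (y_1⋯y_j)^{q^k} for j = 0,…,d-1). Then for each fixed i ∈ {1,…,d-1}, there is a nonzero constant C ∈ F_q^× such that δ_d(y_1,…,y_{d-1}) = C · (y_1⋯y_i)^{q^{d-i}-1} · δ_{d-i}(y_{i+1},…,y_{d-1}) · δ_{d,i}(y_1,…,y_{d-1}), where δ_{d,i} is the product of a_0 + a_1 y_1 + ⋯ + a_{d-1} y_1⋯y_{d-1} over all nonzero (a_0,…,a_{d-1}) ∈ F_q^d with a_j ≠ 0 for some j < i. -/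
open MvPolynomial Finset

section Aux

variable {σ : Type*} {R : Type*}

/-- Product of powers of variables as a monomial. -/
lemma prod_X_pow_eq_monomial' [CommSemiring R] {ι : Type*} (s : Finset ι)
    (g : ι → σ) (e : ι → ℕ) :
    (∏ k ∈ s, (X (g k) : MvPolynomial σ R) ^ e k)
      = monomial (∑ k ∈ s, Finsupp.single (g k) (e k)) 1 := by
  classical
  induction s using Finset.induction_on with
  | empty => simp
  | insert _ _ hk ih =>
      rw [Finset.prod_insert hk, Finset.sum_insert hk, ih, X_pow_eq_monomial,
        monomial_mul, one_mul]

/-- cofactor of a homogeneous polynomial by a homogeneous polynomial of the same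
degree is a constant. -/
lemma exists_C_of_homog_eq_mul [CommRing R] [IsDomain R]
    {f g h : MvPolynomial σ R} {N : ℕ}
    (hf : f.IsHomogeneous N) (hg : g.IsHomogeneous N) (hg0 : g ≠ 0)
    (heq : f = g * h) : h = C (coeff 0 h) := by
  classical
  have hcomp : ∀ c : ℕ, c ≠ 0 → homogeneousComponent c h = 0 := by
    intro c hc
    have h1 : f = ∑ c' ∈ range (h.totalDegree + 1), g * homogeneousComponent c' h := by
      rw [← Finset.mul_sum, sum_homogeneousComponent, heq]
    have h2 : homogeneousComponent (N + c) f = 0 := by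
      rw [homogeneousComponent_of_mem hf]
      simp [hc]
    rw [h1, map_sum] at h2
    have h3 : ∀ c' ∈ range (h.totalDegree + 1),
        homogeneousComponent (N + c) (g * homogeneousComponent c' h)
          = if c' = c then g * homogeneousComponent c h else 0 := by
      intro c' _
      have hhom : (g * homogeneousComponent c' h).IsHomogeneous (N + c') :=
        hg.mul (homogeneousComponent_isHomogeneous c' h)
      rw [homogeneousComponent_of_mem hhom]
      by_cases hcc : c' = c
      · subst hcc; simp
      · rw [if_neg (by omega), if_neg hcc]
    rw [Finset.sum_congr rfl h3] at h2
    by_cases hmem : c ∈ range (h.totalDegree + 1)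
    · rw [Finset.sum_ite_eq' _ c _, if_pos hmem] at h2
      rcases mul_eq_zero.mp h2 with h4 | h4
      · exact absurd h4 hg0
      · exact h4
    · apply homogeneousComponent_eq_zero
      simp at hmem; omega
  have : h = homogeneousComponent 0 h := by
    conv_lhs => rw [← sum_homogeneousComponent h]
    exact Finset.sum_eq_single 0 (fun b _ hb => hcomp b hb) (fun hh => by simp at hh)
  rw [homogeneousComponent_zero] at this
  exact this

/-- product of pairwise non-associate primes dividing an element divides it. -/
lemma prod_primes_dvd' {α : Type*} [CommMonoidWithZero α] [IsCancelMulZero α] {ι : Type*}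
    {s : Finset ι} {f : ι → α} {N : α}
    (hp : ∀ i ∈ s, Prime (f i)) (hd : ∀ i ∈ s, f i ∣ N)
    (hna : ∀ i ∈ s, ∀ j ∈ s, f i ∣ f j → i = j) :
    (∏ i ∈ s, f i) ∣ N := by
  classical
  induction s using Finset.induction_on generalizing N with
  | empty => simp
  | @insert a s ha ih =>
      obtain ⟨t, ht⟩ := hd a (Finset.mem_insert_self a s)
      have hdvd_t : ∀ i ∈ s, f i ∣ t := by
        intro i hi
        have hprime := hp i (Finset.mem_insert_of_mem hi)
        have : f i ∣ f a * t := ht ▸ hd i (Finset.mem_insert_of_mem hi)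
        rcases hprime.dvd_mul.mp this with h | h
        · exfalso
          have := hna i (Finset.mem_insert_of_mem hi) a (Finset.mem_insert_self a s) h
          exact ha (this ▸ hi)
        · exact h
      have := ih (fun i hi => hp i (Finset.mem_insert_of_mem hi)) hdvd_t
        (fun i hi j hj hij => hna i (Finset.mem_insert_of_mem hi) j
          (Finset.mem_insert_of_mem hj) hij)
      rw [Finset.prod_insert ha, ht]
      exact mul_dvd_mul_left _ this

end Aux

section Lin
open scoped Classical

variable {K : Type*} [Field K] [Fintype K] {m : ℕ}

lemma prod_ofAdd_one {γ : Type*} (s : Finset γ) :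
    (∏ _a ∈ s, Multiplicative.ofAdd (1 : ℕ)) = Multiplicative.ofAdd s.card := by
  rw [Finset.prod_const, ← ofAdd_nsmul, smul_eq_mul, mul_one]

lemma filter_ne_nonempty {a : Fin m → K} (h : a ≠ 0) :
    (univ.filter fun j => a j ≠ 0).Nonempty := by
  rcases Function.ne_iff.mp h with ⟨j, hj⟩
  exact ⟨j, by simp only [mem_filter, mem_univ, true_and]; simpa using hj⟩

/-- the largest index where `a` is nonzero. -/
noncomputable def piv {a : Fin m → K} (h : a ≠ 0) : Fin m :=
  (univ.filter fun j => a j ≠ 0).max' (filter_ne_nonempty h)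

lemma piv_ne {a : Fin m → K} (h : a ≠ 0) : a (piv h) ≠ 0 := by
  have := Finset.max'_mem _ (filter_ne_nonempty h)
  exact (Finset.mem_filter.mp this).2

lemma piv_top {a : Fin m → K} (h : a ≠ 0) : ∀ j, piv h < j → a j = 0 := by
  intro j hj
  by_contra hne
  exact absurd (Finset.le_max' _ j (by simp [hne])) (not_le.mpr hj)

lemma piv_eq {a : Fin m → K} (h : a ≠ 0) {k : Fin m} (hk : a k ≠ 0)
    (htop : ∀ j, k < j → a j = 0) : piv h = k := by
  refine le_antisymm (Finset.max'_le _ _ _ fun j hj => ?_) (Finset.le_max' _ _ (by simp [hk]))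
  simp only [mem_filter, mem_univ, true_and] at hj
  by_contra hlt
  exact hj (htop j (not_le.mp hlt))

/-- the set of "monic" vectors. -/
noncomputable def Tset (K : Type*) [Field K] [Fintype K] (m : ℕ) : Finset (Fin m → K) :=
  univ.filter fun a => ∃ k, a k = 1 ∧ ∀ j, k < j → a j = 0

lemma mem_Tset {a : Fin m → K} : a ∈ Tset K m ↔ ∃ k, a k = 1 ∧ ∀ j, k < j → a j = 0 := by
  simp [Tset]

lemma Tset_ne_zero {a : Fin m → K} (ha : a ∈ Tset K m) : a ≠ 0 := by
  rcases mem_Tset.mp ha with ⟨k, hk1, -⟩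
  intro h0
  rw [h0] at hk1
  simpa using hk1

variable {R : Type*} [CommRing R] [Algebra K R]

/-- linear form attached to a coefficient vector. -/
noncomputable def Lf (z : Fin m → R) (a : Fin m → K) : R :=
  ∑ j, algebraMap K R (a j) * z j

lemma Lf_smul (z : Fin m → R) (c : K) (a : Fin m → K) :
    Lf z (c • a) = algebraMap K R c * Lf z a := by
  simp only [Lf, Finset.mul_sum, Pi.smul_apply, smul_eq_mul, map_mul, mul_assoc]

lemma prod_scaling {M : Type*} [CommMonoid M] (f : (Fin m → K) → M) :
    ∏ ct ∈ (univ.filter fun c : K => c ≠ 0) ×ˢ Tset K m, f (ct.1 • ct.2)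
      = ∏ a ∈ univ.filter fun a : Fin m → K => a ≠ 0, f a := by
  refine Finset.prod_bij' (fun ct _ => ct.1 • ct.2)
    (fun a ha => (a (piv (by simpa using (mem_filter.mp ha).2)),
      (a (piv (by simpa using (mem_filter.mp ha).2)))⁻¹ • a)) ?_ ?_ ?_ ?_ ?_
  · rintro ⟨c, t⟩ hct
    simp only [mem_product, mem_filter, mem_univ, true_and] at hct
    obtain ⟨hc, ht⟩ := hct
    rcases mem_Tset.mp ht with ⟨k, hk1, -⟩
    simp only [mem_filter, mem_univ, true_and]
    intro h0
    have : (c • t) k = 0 := by rw [h0]; rfl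
    rw [Pi.smul_apply, hk1, smul_eq_mul, mul_one] at this
    exact hc this
  · intro a ha
    have ha' : a ≠ 0 := by simpa using (mem_filter.mp ha).2
    simp only [mem_product, mem_filter, mem_univ, true_and]
    refine ⟨?_, ?_⟩
    · exact piv_ne ha'
    · refine mem_Tset.mpr ⟨piv ha', ?_, ?_⟩
      · exact inv_mul_cancel₀ (piv_ne ha')
      · intro j hj
        have : a j = 0 := piv_top ha' j hj
        show (a (piv ha'))⁻¹ * a j = 0
        rw [this, mul_zero]
  · rintro ⟨c, t⟩ hct
    simp only [mem_product, mem_filter, mem_univ, true_and] at hct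
    obtain ⟨hc, ht⟩ := hct
    rcases mem_Tset.mp ht with ⟨k, hk1, hk2⟩
    have hne : c • t ≠ 0 := by
      intro h0
      have : (c • t) k = 0 := by rw [h0]; rfl
      rw [Pi.smul_apply, hk1, smul_eq_mul, mul_one] at this
      exact hc this
    have hpiv : piv hne = k := by
      refine piv_eq hne ?_ ?_
      · rw [Pi.smul_apply, hk1, smul_eq_mul, mul_one]; exact hc
      · intro j hj; rw [Pi.smul_apply, hk2 j hj, smul_eq_mul, mul_zero]
    ext1
    · simp only [hpiv, Pi.smul_apply, hk1, smul_eq_mul, mul_one]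
    · simp only [hpiv, Pi.smul_apply, hk1, smul_eq_mul, mul_one, smul_smul,
        inv_mul_cancel₀ hc, one_smul]
  · intro a ha
    have ha' : a ≠ 0 := by simpa using (mem_filter.mp ha).2
    simp only [smul_smul, mul_inv_cancel₀ (piv_ne ha'), one_smul]
  · intro ct hct; rfl

lemma card_Tset_mul :
    ((univ.filter fun c : K => c ≠ 0) ×ˢ Tset K m).card
      = (univ.filter fun a : Fin m → K => a ≠ 0).card := by
  classical
  have e1 := prod_ofAdd_one ((univ.filter fun c : K => c ≠ 0) ×ˢ Tset K m)
  have e2 := prod_ofAdd_one (univ.filter fun a : Fin m → K => a ≠ 0)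
  have e3 := prod_scaling (K := K) (m := m) (fun _ => Multiplicative.ofAdd (1 : ℕ))
  exact Multiplicative.ofAdd.injective (e1.symm.trans (e3.trans e2))

end Lin

section Prim
open scoped Classical

variable {K : Type*} [Field K] [Fintype K] {m : ℕ}

lemma sum_fin_eq {A : Type*} [AddCommMonoid A] (k : Fin m) (F : Fin m → A) :
    ∑ j, F j = F k + ∑ s : {j : Fin m // j ≠ k}, F s := by
  rw [← Equiv.sum_comp (Equiv.optionSubtypeNe k) F, univ_option,
    Finset.sum_insertNone]
  simp

/-- the standard iso singling out variable `k`. -/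
noncomputable def Ek (K : Type*) [Field K] {m : ℕ} (k : Fin m) :
    MvPolynomial (Fin m) K ≃ₐ[K] Polynomial (MvPolynomial {j : Fin m // j ≠ k} K) :=
  (renameEquiv K ((Equiv.optionSubtypeNe k).symm)).trans
    (optionEquivLeft K {j : Fin m // j ≠ k})

lemma Ek_X_self (k : Fin m) : Ek K k (X k) = Polynomial.X := by
  simp [Ek, renameEquiv_apply, rename_X, Equiv.optionSubtypeNe_symm_self,
    optionEquivLeft_X_none]

lemma Ek_X_ne (k : Fin m) {j : Fin m} (h : j ≠ k) :
    Ek K k (X j) = Polynomial.C (X ⟨j, h⟩) := by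
  simp [Ek, renameEquiv_apply, rename_X, Equiv.optionSubtypeNe_symm_of_ne h,
    optionEquivLeft_X_some]

lemma Ek_C (k : Fin m) (r : K) : Ek K k (C r) = Polynomial.C (C r) := by
  simp [Ek, renameEquiv_apply, rename_C, optionEquivLeft_C]

/-- the part of the linear form away from `k`. -/
noncomputable def gk (k : Fin m) (a : Fin m → K) : MvPolynomial {j : Fin m // j ≠ k} K :=
  ∑ s : {j : Fin m // j ≠ k}, C (a s) * X s

lemma Ek_Lf (k : Fin m) (a : Fin m → K) :
    Ek K k (Lf (fun j => (X j : MvPolynomial (Fin m) K)) a)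
      = Polynomial.C (C (a k)) * Polynomial.X + Polynomial.C (gk k a) := by
  rw [Lf, map_sum, sum_fin_eq k]
  have h1 : Ek K k (algebraMap K _ (a k) * X k) = Polynomial.C (C (a k)) * Polynomial.X := by
    rw [map_mul, Ek_X_self, MvPolynomial.algebraMap_eq, Ek_C]
  have h2 : ∀ s : {j : Fin m // j ≠ k},
      Ek K k (algebraMap K _ (a s) * X (s : Fin m)) = Polynomial.C (C (a s) * X s) := by
    intro s
    rw [map_mul, MvPolynomial.algebraMap_eq, Ek_C, Ek_X_ne k s.2, ← map_mul]
  rw [h1]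
  congr 1
  rw [Finset.sum_congr rfl fun s _ => h2 s, ← map_sum]
  rfl

lemma coeff_Lf (a : Fin m → K) (j : Fin m) :
    coeff (Finsupp.single j 1) (Lf (fun t => (X t : MvPolynomial (Fin m) K)) a) = a j := by
  rw [Lf]
  rw [coeff_sum]
  have : ∀ t : Fin m, coeff (Finsupp.single j 1)
      (algebraMap K (MvPolynomial (Fin m) K) (a t) * X t)
        = if t = j then a t else 0 := by
    intro t
    rw [MvPolynomial.algebraMap_eq, coeff_C_mul, coeff_X']
    by_cases h : t = j
    · subst h; simp
    · rw [if_neg (by simpa [Finsupp.single_left_inj (one_ne_zero (α := ℕ))] using h), mul_zero,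
        if_neg h]
  rw [Finset.sum_congr rfl fun t _ => this t, Finset.sum_ite_eq' univ j, if_pos (mem_univ j)]

lemma Lf_homog (a : Fin m → K) :
    (Lf (fun t => (X t : MvPolynomial (Fin m) K)) a).IsHomogeneous 1 := by
  apply MvPolynomial.IsHomogeneous.sum
  intro t _
  rw [MvPolynomial.algebraMap_eq]
  exact isHomogeneous_C_mul_X _ _

lemma Lf_ne_zero {a : Fin m → K} (ha : a ≠ 0) :
    Lf (fun t => (X t : MvPolynomial (Fin m) K)) a ≠ 0 := by
  intro h0
  have := coeff_Lf a (piv ha)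
  rw [h0] at this
  exact piv_ne ha (by simpa using this.symm)

lemma prime_Lf {a : Fin m → K} {k : Fin m} (hak : a k = 1) :
    Prime (Lf (fun t => (X t : MvPolynomial (Fin m) K)) a) := by
  rw [← MulEquiv.prime_iff (Ek K k).toRingEquiv.toMulEquiv]
  have : (Ek K k).toRingEquiv.toMulEquiv (Lf (fun t => (X t : MvPolynomial (Fin m) K)) a)
      = Polynomial.X + Polynomial.C (gk k a) := by
    show Ek K k _ = _
    rw [Ek_Lf k a, hak]
    simp
  rw [this]
  have h0 : Prime (Polynomial.X - Polynomial.C (-(gk k a))) := by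
    refine (Ideal.span_singleton_prime (Polynomial.X_sub_C_ne_zero _)).mp ?_
    rw [← Polynomial.ker_evalRingHom]
    exact RingHom.ker_isPrime _
  simpa [sub_neg_eq_add] using h0

end Prim

section Det
open scoped Classical

variable {K : Type*} [Field K] [Fintype K] {p n : ℕ} [Fact p.Prime] [CharP K p]

lemma pow_q_sum (hcard : Fintype.card K = p ^ n) {R' : Type*} [CommRing R'] [Algebra K R']
    [CharP R' p] {m : ℕ} (c : Fin m → K) (y : Fin m → R') (e : ℕ) :
    (∑ j, algebraMap K R' (c j) * y j) ^ (p ^ n) ^ e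
      = ∑ j, algebraMap K R' (c j) * y j ^ (p ^ n) ^ e := by
  have hq : (p ^ n) ^ e = p ^ (n * e) := (pow_mul p n e).symm
  rw [hq, sum_pow_char_pow]
  refine Finset.sum_congr rfl fun j _ => ?_
  rw [mul_pow, ← map_pow, ← hq]
  congr 2
  rw [← hcard]
  exact FiniteField.pow_card_pow e (c j)

/-- the Moore determinant on generic variables. -/
noncomputable def Dm (K : Type*) [Field K] (q m : ℕ) : MvPolynomial (Fin m) K :=
  (Matrix.of fun j k : Fin m => (X j : MvPolynomial (Fin m) K) ^ q ^ (k : ℕ)).det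

lemma Lf_dvd_Dm (hcard : Fintype.card K = p ^ n) {m : ℕ} {a : Fin m → K} {k : Fin m}
    (hak : a k = 1) :
    Lf (fun t => (X t : MvPolynomial (Fin m) K)) a ∣ Dm K (p ^ n) m := by
  set g := gk k a with hg
  have hEL : Ek K k (Lf (fun t => (X t : MvPolynomial (Fin m) K)) a)
      = Polynomial.X - Polynomial.C (-g) := by
    rw [Ek_Lf k a, hak]
    simp [sub_neg_eq_add, hg]
  set φ : MvPolynomial (Fin m) K →+* MvPolynomial {j : Fin m // j ≠ k} K :=
    (Polynomial.evalRingHom (-g)).comp (Ek K k).toRingEquiv.toRingHom with hφ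
  have hroot : Polynomial.eval (-g) (Ek K k (Dm K (p ^ n) m)) = 0 := by
    have h0 : Polynomial.eval (-g) (Ek K k (Dm K (p ^ n) m)) = φ (Dm K (p ^ n) m) := rfl
    rw [h0, Dm, RingHom.map_det]
    set y : Fin m → MvPolynomial {j : Fin m // j ≠ k} K :=
      fun j => if h : j = k then -g else X ⟨j, h⟩ with hy
    have hφX : ∀ j, φ (X j) = y j := by
      intro j
      have hshow : φ (X j) = Polynomial.eval (-g) (Ek K k (X j)) := rfl
      by_cases h : j = k
      · rw [hshow, h, Ek_X_self, Polynomial.eval_X, hy]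
        simp
      · rw [hshow, Ek_X_ne k h, Polynomial.eval_C, hy]
        simp [h]
    have hN : ((Matrix.of fun j k' : Fin m =>
        (X j : MvPolynomial (Fin m) K) ^ (p ^ n) ^ (k' : ℕ)).map φ)
          = Matrix.of fun j k' : Fin m => (y j) ^ (p ^ n) ^ (k' : ℕ) := by
      ext j k'
      simp [Matrix.map_apply, map_pow, hφX]
    rw [RingHom.mapMatrix_apply, hN]
    set M : Matrix (Fin m) (Fin m) (MvPolynomial {j : Fin m // j ≠ k} K) :=
      Matrix.of fun j k' : Fin m => (y j) ^ (p ^ n) ^ (k' : ℕ) with hM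
    set c : Fin m → K := fun j => if j = k then 0 else -(a j) with hc
    have hyrel : ∑ j, algebraMap K _ (c j) * y j = -g := by
      rw [sum_fin_eq k]
      have t1 : algebraMap K _ (c k) * y k = 0 := by
        rw [hc]
        simp
      rw [t1, zero_add, hg, gk, ← Finset.sum_neg_distrib]
      refine Finset.sum_congr rfl fun s _ => ?_
      have t2 : c (s : Fin m) = -(a s) := by rw [hc]; simp [s.2]
      have t3 : y (s : Fin m) = X s := by rw [hy]; simp [s.2]
      rw [t2, t3, map_neg, MvPolynomial.algebraMap_eq, neg_mul]
    have hrow : M k = ∑ j, (algebraMap K (MvPolynomial {j : Fin m // j ≠ k} K) (c j)) • M j := by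
      funext k'
      have h1 := pow_q_sum hcard c y (k' : ℕ)
      rw [hyrel] at h1
      have h2 : M k k' = (-g) ^ (p ^ n) ^ (k' : ℕ) := by
        rw [hM, Matrix.of_apply, hy]
        simp
      rw [h2, h1]
      simp [hM, smul_eq_mul]
    calc M.det = (M.updateRow k (M k)).det := by rw [Matrix.updateRow_eq_self]
      _ = (M.updateRow k (∑ j, (algebraMap K _ (c j)) • M j)).det := by rw [← hrow]
      _ = (algebraMap K (MvPolynomial {j : Fin m // j ≠ k} K) (c k)) • M.det :=
          Matrix.det_updateRow_sum M k _
      _ = 0 := by rw [hc]; simp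
  have hdvd : Ek K k (Lf (fun t => (X t : MvPolynomial (Fin m) K)) a)
      ∣ Ek K k (Dm K (p ^ n) m) := by
    rw [hEL]
    exact Polynomial.dvd_iff_isRoot.mpr hroot
  obtain ⟨t, ht⟩ := hdvd
  refine ⟨(Ek K k).symm t, ?_⟩
  apply (Ek K k).injective
  rw [map_mul, ht, AlgEquiv.apply_symm_apply]

lemma Dm_homog (q m : ℕ) :
    (Dm K q m).IsHomogeneous (∑ k : Fin m, q ^ (k : ℕ)) := by
  rw [Dm, Matrix.det_apply]
  apply MvPolynomial.IsHomogeneous.sum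
  intro σ _
  have h1 : (∏ k : Fin m, (Matrix.of fun j k' : Fin m =>
      (X j : MvPolynomial (Fin m) K) ^ q ^ (k' : ℕ)) (σ k) k).IsHomogeneous
        (∑ k : Fin m, q ^ (k : ℕ)) := by
    apply MvPolynomial.IsHomogeneous.prod
    intro k _
    simp only [Matrix.of_apply]
    exact isHomogeneous_X_pow _ _
  rw [Units.smul_def, zsmul_eq_mul]
  have h2 : ((Equiv.Perm.sign σ : ℤ) : MvPolynomial (Fin m) K)
      = C ((Equiv.Perm.sign σ : ℤ) : K) := by
    rw [← map_intCast (C : K →+* MvPolynomial (Fin m) K)]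
  rw [h2]
  exact h1.C_mul _

lemma coeff_Dm (q m : ℕ) (hq : 2 ≤ q) :
    coeff (∑ k : Fin m, Finsupp.single k (q ^ (k : ℕ))) (Dm K q m) = 1 := by
  rw [Dm, Matrix.det_apply, coeff_sum]
  have hterm : ∀ σ : Equiv.Perm (Fin m),
      (∏ k : Fin m, (Matrix.of fun j k' : Fin m =>
        (X j : MvPolynomial (Fin m) K) ^ q ^ (k' : ℕ)) (σ k) k)
      = monomial (∑ k : Fin m, Finsupp.single (σ k) (q ^ (k : ℕ))) (1 : K) := by
    intro σ
    simpa [Matrix.of_apply] using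
      prod_X_pow_eq_monomial' (R := K) univ (fun k : Fin m => σ k) (fun k : Fin m => q ^ (k : ℕ))
  have hμ : ∀ σ : Equiv.Perm (Fin m),
      (∑ k : Fin m, Finsupp.single (σ k) (q ^ (k : ℕ)))
        = (∑ k : Fin m, Finsupp.single k (q ^ (k : ℕ))) → σ = 1 := by
    intro σ hσ
    have hval : ∀ j : Fin m, (∑ k : Fin m, Finsupp.single (σ k) (q ^ (k : ℕ))) j
        = q ^ ((σ⁻¹ j : Fin m) : ℕ) := by
      intro j
      rw [Finset.sum_apply']
      rw [Finset.sum_eq_single (σ⁻¹ j)]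
      · rw [Finsupp.single_apply, if_pos (show σ (σ⁻¹ j) = j from Equiv.apply_symm_apply σ j)]
      · intro k _ hk
        rw [Finsupp.single_apply, if_neg]
        intro h
        exact hk (by rw [← h]; simp)
      · intro h
        exact absurd (mem_univ _) h
    have hval2 : ∀ j : Fin m, (∑ k : Fin m, Finsupp.single k (q ^ (k : ℕ))) j
        = q ^ (j : ℕ) := by
      intro j
      have := hval j  -- not directly; do same computation with σ = 1
      rw [Finset.sum_apply']
      rw [Finset.sum_eq_single j]
      · rw [Finsupp.single_apply, if_pos rfl]
      · intro k _ hk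
        rw [Finsupp.single_apply, if_neg hk]
      · intro h
        exact absurd (mem_univ _) h
    have : ∀ j : Fin m, σ⁻¹ j = j := by
      intro j
      have h1 : q ^ ((σ⁻¹ j : Fin m) : ℕ) = q ^ (j : ℕ) := by
        rw [← hval j, hσ, hval2 j]
      have := Nat.pow_right_injective hq h1
      exact Fin.ext this
    ext j : 1
    have h2 := this (σ j)
    rw [show σ⁻¹ (σ j) = j from Equiv.symm_apply_apply σ j] at h2
    rw [Equiv.Perm.one_apply]
    exact h2.symm
  rw [Finset.sum_eq_single (1 : Equiv.Perm (Fin m))]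
  · rw [hterm, coeff_smul, coeff_monomial, if_pos (by simp)]
    simp
  · intro σ _ hσ
    rw [hterm, coeff_smul, coeff_monomial, if_neg]
    · simp
    · intro h
      exact hσ (hμ σ h)
  · intro h
    exact absurd (mem_univ _) h

end Det

section Moore
open scoped Classical

variable {K : Type*} [Field K] [Fintype K] {p n : ℕ} [Fact p.Prime] [CharP K p] {m : ℕ}

lemma Lf_dvd_inj {a b : Fin m → K} (ha : a ∈ Tset K m) (hb : b ∈ Tset K m)
    (hdvd : Lf (fun t => (X t : MvPolynomial (Fin m) K)) a
      ∣ Lf (fun t => (X t : MvPolynomial (Fin m) K)) b) : a = b := by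
  obtain ⟨ka, hka1, hka2⟩ := mem_Tset.mp ha
  obtain ⟨kb, hkb1, hkb2⟩ := mem_Tset.mp hb
  have hpa := prime_Lf (K := K) (m := m) hka1
  have hpb := prime_Lf (K := K) (m := m) hkb1
  obtain ⟨u, hu⟩ := hpa.associated_of_dvd hpb hdvd
  have hcof : (u : MvPolynomial (Fin m) K) = C (coeff 0 (u : MvPolynomial (Fin m) K)) :=
    exists_C_of_homog_eq_mul (Lf_homog b) (Lf_homog a)
      (Lf_ne_zero (Tset_ne_zero ha)) hu.symm
  set s := coeff 0 (u : MvPolynomial (Fin m) K) with hsdef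
  have hb_eq : ∀ j, b j = s * a j := by
    intro j
    have h1 : Lf (fun t => (X t : MvPolynomial (Fin m) K)) b
        = C s * Lf (fun t => (X t : MvPolynomial (Fin m) K)) a := by
      rw [← hu, hcof, mul_comm]
    have := congrArg (coeff (Finsupp.single j 1)) h1
    rwa [coeff_Lf, coeff_C_mul, coeff_Lf] at this
  have hs : s ≠ 0 := by
    intro h0
    have := hb_eq kb
    rw [hkb1, h0, zero_mul] at this
    exact one_ne_zero this
  have hbne : b ≠ 0 := Tset_ne_zero hb
  have h1 : piv hbne = kb := piv_eq hbne (by rw [hkb1]; exact one_ne_zero) hkb2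
  have h2 : piv hbne = ka := piv_eq hbne
    (by rw [hb_eq ka, hka1, mul_one]; exact hs)
    (fun j hj => by rw [hb_eq j, hka2 j hj, mul_zero])
  have hkab : kb = ka := h1 ▸ h2
  have hs1 : s = 1 := by
    have := hb_eq kb
    rw [hkb1, hkab, hka1, mul_one] at this
    exact this.symm
  funext j
  rw [hb_eq j, hs1, one_mul]

lemma card_Tset (hq : 2 ≤ Fintype.card K) :
    (Tset K m).card = ∑ k ∈ Finset.range m, Fintype.card K ^ k := by
  have h1 := card_Tset_mul (K := K) (m := m)
  rw [Finset.card_product] at h1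
  have h2 : (univ.filter fun c : K => c ≠ 0).card = Fintype.card K - 1 := by
    rw [show (univ.filter fun c : K => c ≠ 0) = univ.erase 0 from Finset.filter_ne' univ 0,
      Finset.card_erase_of_mem (mem_univ 0), Finset.card_univ]
  have h3 : (univ.filter fun a : Fin m → K => a ≠ 0).card = Fintype.card K ^ m - 1 := by
    rw [show (univ.filter fun a : Fin m → K => a ≠ 0) = univ.erase 0 from
        Finset.filter_ne' univ 0,
      Finset.card_erase_of_mem (mem_univ 0), Finset.card_univ, Fintype.card_fun,
      Fintype.card_fin]
  rw [h2, h3] at h1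
  have hq1 : (1 : ℕ) ≤ Fintype.card K := by omega
  have hqm : (1 : ℕ) ≤ Fintype.card K ^ m := Nat.one_le_pow m _ (by omega)
  have h4 : ((Fintype.card K : ℤ) - 1) * ((Tset K m).card : ℤ)
      = (Fintype.card K : ℤ) ^ m - 1 := by
    have := congrArg (Nat.cast : ℕ → ℤ) h1
    rw [Nat.cast_mul, Nat.cast_sub hq1, Nat.cast_sub hqm] at this
    push_cast at this ⊢
    linarith
  have h5 : ((Fintype.card K : ℤ) - 1) * ((∑ k ∈ Finset.range m, Fintype.card K ^ k : ℕ) : ℤ)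
      = (Fintype.card K : ℤ) ^ m - 1 := by
    push_cast
    rw [mul_comm, geom_sum_mul]
  have h6 := h4.trans h5.symm
  have h7 : ((Fintype.card K : ℤ) - 1) ≠ 0 := by
    have : (2 : ℤ) ≤ (Fintype.card K : ℤ) := by exact_mod_cast hq
    omega
  exact_mod_cast mul_left_cancel₀ h7 h6

theorem Dm_eq (hcard : Fintype.card K = p ^ n) (hn : n ≠ 0) :
    ∃ s : K, s ≠ 0 ∧ Dm K (p ^ n) m
      = C s * ∏ a ∈ Tset K m, Lf (fun t => (X t : MvPolynomial (Fin m) K)) a := by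
  have hp2 : 2 ≤ p := (Fact.out : p.Prime).two_le
  have hq2 : 2 ≤ p ^ n := by
    calc 2 = 2 ^ 1 := rfl
    _ ≤ p ^ n := Nat.pow_le_pow_left hp2 1 |>.trans (Nat.pow_le_pow_right (by omega) (by omega))
  have hdvd : (∏ a ∈ Tset K m, Lf (fun t => (X t : MvPolynomial (Fin m) K)) a)
      ∣ Dm K (p ^ n) m := by
    refine prod_primes_dvd' (fun a haT => ?_) (fun a haT => ?_)
      (fun a haT b hbT hab => Lf_dvd_inj haT hbT hab)
    · obtain ⟨k, hk1, -⟩ := mem_Tset.mp haT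
      exact prime_Lf hk1
    · obtain ⟨k, hk1, -⟩ := mem_Tset.mp haT
      exact Lf_dvd_Dm hcard hk1
  obtain ⟨r, hr⟩ := hdvd
  have hQ0 : (∏ a ∈ Tset K m, Lf (fun t => (X t : MvPolynomial (Fin m) K)) a) ≠ 0 :=
    Finset.prod_ne_zero_iff.mpr fun a haT => Lf_ne_zero (Tset_ne_zero haT)
  have hhomQ : (∏ a ∈ Tset K m, Lf (fun t => (X t : MvPolynomial (Fin m) K)) a).IsHomogeneous
      (∑ k : Fin m, (p ^ n) ^ (k : ℕ)) := by
    have hh := MvPolynomial.IsHomogeneous.prod (Tset K m)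
      (fun a => Lf (fun t => (X t : MvPolynomial (Fin m) K)) a) (fun _ => 1)
      (fun a _ => Lf_homog a)
    have hcT : (∑ _a ∈ Tset K m, 1) = ∑ k : Fin m, (p ^ n) ^ (k : ℕ) := by
      rw [Finset.sum_const, smul_eq_mul, mul_one, card_Tset (hcard ▸ hq2), hcard,
        Fin.sum_univ_eq_sum_range]
    rwa [hcT] at hh
  have hD0 : Dm K (p ^ n) m ≠ 0 := by
    intro h0
    have := coeff_Dm (K := K) (p ^ n) m hq2
    rw [h0, coeff_zero] at this
    exact one_ne_zero this.symm
  have hrC := exists_C_of_homog_eq_mul (Dm_homog (K := K) (p ^ n) m) hhomQ hQ0 hr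
  refine ⟨coeff 0 r, ?_, ?_⟩
  · intro h0
    apply hD0
    rw [hr, hrC, h0, map_zero, mul_zero]
  · conv_lhs => rw [hr, hrC]
    rw [mul_comm]

end Moore

/-- The quantity `δ = det((z j ^ q^k))^(q-1)` attached to a family `z`. -/
noncomputable def mooreDelta {R : Type*} [CommRing R] (q : ℕ) {m : ℕ} (z : Fin m → R) : R :=
  (Matrix.det (Matrix.of fun j k : Fin m => z j ^ q ^ (k : ℕ))) ^ (q - 1)

section Spec
open scoped Classical

variable {K : Type*} [Field K] [Fintype K] {p n : ℕ} [Fact p.Prime] [CharP K p]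

lemma card_filter_ne_K : (univ.filter fun c : K => c ≠ 0).card = Fintype.card K - 1 := by
  rw [show (univ.filter fun c : K => c ≠ 0) = univ.erase 0 from Finset.filter_ne' univ 0,
    Finset.card_erase_of_mem (mem_univ 0), Finset.card_univ]

lemma prod_ne_Lf {R : Type*} [CommRing R] [Algebra K R] {m : ℕ} (z : Fin m → R) :
    ∏ a ∈ univ.filter (fun a : Fin m → K => a ≠ 0), Lf z a
      = algebraMap K R ((∏ c ∈ univ.filter fun c : K => c ≠ 0, c) ^ (Tset K m).card)
        * (∏ a ∈ Tset K m, Lf z a) ^ ((univ.filter fun c : K => c ≠ 0).card) := by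
  rw [← prod_scaling (f := Lf z), Finset.prod_product]
  have h1 : ∀ c ∈ (univ.filter fun c : K => c ≠ 0), ∏ t ∈ Tset K m, Lf z (c • t)
      = algebraMap K R c ^ (Tset K m).card * ∏ t ∈ Tset K m, Lf z t := by
    intro c _
    rw [Finset.prod_congr rfl fun t _ => Lf_smul z c t, Finset.prod_mul_distrib,
      Finset.prod_const]
  rw [Finset.prod_congr rfl h1, Finset.prod_mul_distrib, Finset.prod_const,
    Finset.prod_pow, ← map_prod, ← map_pow]

theorem delta_eq (hcard : Fintype.card K = p ^ n) (hn : n ≠ 0)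
    {R : Type*} [CommRing R] [Algebra K R] {m : ℕ} (z : Fin m → R) :
    ∃ u : K, u ≠ 0 ∧ mooreDelta (p ^ n) z
      = algebraMap K R u * ∏ a ∈ univ.filter (fun a : Fin m → K => a ≠ 0), Lf z a := by
  obtain ⟨s, hs, hD⟩ := Dm_eq (K := K) (m := m) hcard hn
  have hLf : ∀ a : Fin m → K,
      aeval z (Lf (fun t => (X t : MvPolynomial (Fin m) K)) a) = Lf z a := by
    intro a
    rw [Lf, map_sum, Lf]
    refine Finset.sum_congr rfl fun j _ => ?_
    rw [map_mul, aeval_X, AlgHom.commutes]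
  have hspec : (Matrix.of fun j k : Fin m => z j ^ (p ^ n) ^ (k : ℕ)).det
      = algebraMap K R s * ∏ a ∈ Tset K m, Lf z a := by
    have h1 := congrArg (aeval (R := K) z) hD
    have h2 : aeval (R := K) z (Dm K (p ^ n) m)
        = (Matrix.of fun j k : Fin m => z j ^ (p ^ n) ^ (k : ℕ)).det := by
      rw [Dm]
      have h3 := RingHom.map_det ((aeval (R := K) z : MvPolynomial (Fin m) K →ₐ[K] R) :
        MvPolynomial (Fin m) K →+* R)
        (Matrix.of fun j k : Fin m => (X j : MvPolynomial (Fin m) K) ^ (p ^ n) ^ (k : ℕ))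
      rw [show ((aeval (R := K) z : MvPolynomial (Fin m) K →ₐ[K] R) :
        MvPolynomial (Fin m) K →+* R) ((Matrix.of fun j k : Fin m =>
          (X j : MvPolynomial (Fin m) K) ^ (p ^ n) ^ (k : ℕ)).det)
        = aeval (R := K) z ((Matrix.of fun j k : Fin m =>
          (X j : MvPolynomial (Fin m) K) ^ (p ^ n) ^ (k : ℕ)).det) from rfl] at h3
      rw [h3]
      congr 1
      ext j k
      simp [RingHom.mapMatrix_apply, Matrix.map_apply, map_pow]
    have h4 : aeval (R := K) z (C s * ∏ a ∈ Tset K m,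
        Lf (fun t => (X t : MvPolynomial (Fin m) K)) a)
          = algebraMap K R s * ∏ a ∈ Tset K m, Lf z a := by
      rw [map_mul, aeval_C, map_prod]
      congr 1
      exact Finset.prod_congr rfl fun a _ => hLf a
    rw [h2, h4] at h1
    exact h1
  set w : K := (∏ c ∈ univ.filter fun c : K => c ≠ 0, c) ^ (Tset K m).card with hwdef
  have hw0 : w ≠ 0 := pow_ne_zero _ (Finset.prod_ne_zero_iff.mpr fun c hc => by
    simpa using (mem_filter.mp hc).2)
  refine ⟨s ^ (p ^ n - 1) * w⁻¹, mul_ne_zero (pow_ne_zero _ hs) (inv_ne_zero hw0), ?_⟩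
  have hprod := prod_ne_Lf (K := K) z
  rw [card_filter_ne_K, hcard, ← hwdef] at hprod
  rw [mooreDelta, hspec, mul_pow, ← map_pow, hprod]
  rw [map_mul]
  have : algebraMap K R w⁻¹ * algebraMap K R w = 1 := by
    rw [← map_mul, inv_mul_cancel₀ hw0, map_one]
  calc algebraMap K R (s ^ (p ^ n - 1)) * (∏ a ∈ Tset K m, Lf z a) ^ (p ^ n - 1)
      = algebraMap K R (s ^ (p ^ n - 1)) * ((algebraMap K R w⁻¹ * algebraMap K R w)
        * (∏ a ∈ Tset K m, Lf z a) ^ (p ^ n - 1)) := by rw [this, one_mul]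
    _ = algebraMap K R (s ^ (p ^ n - 1)) * algebraMap K R w⁻¹
        * (algebraMap K R w * (∏ a ∈ Tset K m, Lf z a) ^ (p ^ n - 1)) := by ring

end Spec

/-- **Factorization of `δ_d`.**  In `F_q[y_1,…,y_{d-1}]`, with `z_j = y_1⋯y_j`,
`δ_d = det((z_j^{q^k}))^{q-1}` factors, for each `1 ≤ i ≤ d-1`, as a nonzero constant times
`(y_1⋯y_i)^{q^{d-i}-1} · δ_{d-i}(y_{i+1},…,y_{d-1}) · δ_{d,i}`, where `δ_{d,i}` is the
product of the linear forms `a_0 + a_1 y_1 + ⋯ + a_{d-1} y_1⋯y_{d-1}` over all nonzero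
`a ∈ F_q^d` with `a_j ≠ 0` for some `j < i`. -/
theorem delta_factorization
    (p n d i : ℕ) [Fact p.Prime] (hn : 0 < n) (hi : 1 ≤ i) (hid : i ≤ d - 1) :
    ∃ Cst : GaloisField p n, Cst ≠ 0 ∧
      mooreDelta (p ^ n)
          (fun j : Fin d => ∏ t ∈ Finset.univ.filter (fun t : Fin (d-1) => (t : ℕ) < (j : ℕ)),
            (X t : MvPolynomial (Fin (d-1)) (GaloisField p n))) =
        C Cst *
          (∏ t ∈ Finset.univ.filter (fun t : Fin (d-1) => (t : ℕ) < i),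
            (X t : MvPolynomial (Fin (d-1)) (GaloisField p n))) ^ ((p ^ n) ^ (d - i) - 1) *
          mooreDelta (p ^ n)
            (fun j : Fin (d - i) =>
              ∏ t ∈ Finset.univ.filter
                  (fun t : Fin (d-1) => i ≤ (t : ℕ) ∧ (t : ℕ) < i + (j : ℕ)),
                (X t : MvPolynomial (Fin (d-1)) (GaloisField p n))) *
          ∏ᶠ (a : Fin d → GaloisField p n)
              (_ : a ≠ 0 ∧ ∃ j : Fin d, (j : ℕ) < i ∧ a j ≠ 0),
            ∑ j : Fin d, C (a j) *
              ∏ t ∈ Finset.univ.filter (fun t : Fin (d-1) => (t : ℕ) < (j : ℕ)),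
                (X t : MvPolynomial (Fin (d-1)) (GaloisField p n)) := by
  classical
  haveI : Fintype (GaloisField p n) := Fintype.ofFinite _
  have hcard : Fintype.card (GaloisField p n) = p ^ n := by
    have := GaloisField.card p n (by omega)
    rwa [Nat.card_eq_fintype_card] at this
  have hn' : n ≠ 0 := by omega
  have hd2 : 2 ≤ d := by omega
  have hid' : i ≤ d - 1 := hid
  set z : Fin d → MvPolynomial (Fin (d-1)) (GaloisField p n) :=
    fun j : Fin d => ∏ t ∈ Finset.univ.filter (fun t : Fin (d-1) => (t : ℕ) < (j : ℕ)),
      (X t : MvPolynomial (Fin (d-1)) (GaloisField p n)) with hz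
  set wv : Fin (d - i) → MvPolynomial (Fin (d-1)) (GaloisField p n) :=
    fun j : Fin (d - i) =>
      ∏ t ∈ Finset.univ.filter
          (fun t : Fin (d-1) => i ≤ (t : ℕ) ∧ (t : ℕ) < i + (j : ℕ)),
        (X t : MvPolynomial (Fin (d-1)) (GaloisField p n)) with hwv
  set Zi : MvPolynomial (Fin (d-1)) (GaloisField p n) :=
    ∏ t ∈ Finset.univ.filter (fun t : Fin (d-1) => (t : ℕ) < i),
      (X t : MvPolynomial (Fin (d-1)) (GaloisField p n)) with hZi
  obtain ⟨u1, hu1, e1⟩ := delta_eq hcard hn' z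
  obtain ⟨u2, hu2, e2⟩ := delta_eq hcard hn' wv
  -- the low part as a finset product
  have hlow : (∏ᶠ (a : Fin d → GaloisField p n)
      (_ : a ≠ 0 ∧ ∃ j : Fin d, (j : ℕ) < i ∧ a j ≠ 0),
        ∑ j : Fin d, C (a j) *
          ∏ t ∈ Finset.univ.filter (fun t : Fin (d-1) => (t : ℕ) < (j : ℕ)),
            (X t : MvPolynomial (Fin (d-1)) (GaloisField p n)))
      = ∏ a ∈ (univ.filter (fun a : Fin d → GaloisField p n => a ≠ 0)).filter
          (fun a => ∃ j : Fin d, (j : ℕ) < i ∧ a j ≠ 0), Lf z a := by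
    rw [finprod_cond_eq_prod_of_cond_iff _ (fun {a} => ?_)]
    · refine Finset.prod_congr rfl fun a _ => ?_
      simp [Lf, MvPolynomial.algebraMap_eq, hz]
    · simp only [Finset.mem_filter, Finset.mem_univ, true_and]
      tauto
  -- vanishing description of the high part
  have hmemHigh : ∀ a : Fin d → GaloisField p n,
      a ∈ (univ.filter (fun a : Fin d → GaloisField p n => a ≠ 0)).filter
          (fun a => ¬ ∃ j : Fin d, (j : ℕ) < i ∧ a j ≠ 0)
        ↔ (a ≠ 0 ∧ ∀ j : Fin d, (j : ℕ) < i → a j = 0) := by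
    intro a
    simp only [Finset.mem_filter, Finset.mem_univ, true_and]
    constructor
    · rintro ⟨h1, h2⟩
      push_neg at h2
      exact ⟨h1, h2⟩
    · rintro ⟨h1, h2⟩
      refine ⟨h1, ?_⟩
      push_neg
      exact h2
  -- z at shifted index
  have hz_eq : ∀ s : Fin (d - i), z ⟨i + (s : ℕ), by omega⟩ = Zi * wv s := by
    intro s
    have h0 := Finset.prod_filter_mul_prod_filter_not
      (univ.filter fun t : Fin (d-1) => (t : ℕ) < i + (s : ℕ))
      (fun t : Fin (d-1) => (t : ℕ) < i)
      (fun t => (X t : MvPolynomial (Fin (d-1)) (GaloisField p n)))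
    rw [Finset.filter_filter, Finset.filter_filter] at h0
    have ha : (univ.filter fun t : Fin (d-1) => ((t : ℕ) < i + (s : ℕ)) ∧ (t : ℕ) < i)
        = univ.filter fun t : Fin (d-1) => (t : ℕ) < i := by
      apply Finset.filter_congr
      intro t _
      constructor
      · rintro ⟨-, h⟩; exact h
      · intro h; exact ⟨by omega, h⟩
    have hb : (univ.filter fun t : Fin (d-1) => ((t : ℕ) < i + (s : ℕ)) ∧ ¬ (t : ℕ) < i)
        = univ.filter fun t : Fin (d-1) => i ≤ (t : ℕ) ∧ (t : ℕ) < i + (s : ℕ) := by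
      apply Finset.filter_congr
      intro t _
      omega
    rw [ha, hb] at h0
    rw [hz, hwv, hZi]
    exact h0.symm
  -- the pointwise identity on the high part
  have hpoint : ∀ a : Fin d → GaloisField p n,
      (∀ j : Fin d, (j : ℕ) < i → a j = 0) →
      Lf z a = Zi * Lf wv (fun s : Fin (d - i) => a ⟨i + (s : ℕ), by omega⟩) := by
    intro a hvan
    rw [Lf]
    have step1 : ∑ j : Fin d, algebraMap (GaloisField p n) _ (a j) * z j
        = ∑ j ∈ univ.filter (fun j : Fin d => i ≤ (j : ℕ)),
            algebraMap (GaloisField p n) _ (a j) * z j := by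
      refine (Finset.sum_subset (Finset.filter_subset _ _) fun j _ hj => ?_).symm
      have : a j = 0 := hvan j (by simpa using hj)
      rw [this, map_zero, zero_mul]
    rw [step1]
    have step2 : ∑ j ∈ univ.filter (fun j : Fin d => i ≤ (j : ℕ)),
        algebraMap (GaloisField p n) _ (a j) * z j
          = ∑ s : Fin (d - i),
              algebraMap (GaloisField p n) _ (a ⟨i + (s : ℕ), by omega⟩)
                * z ⟨i + (s : ℕ), by omega⟩ := by
      refine (Finset.sum_nbij' (fun s : Fin (d - i) => (⟨i + (s : ℕ), by omega⟩ : Fin d))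
        (fun j : Fin d => (⟨(j : ℕ) - i, by omega⟩ : Fin (d - i)))
        ?_ ?_ ?_ ?_ ?_).symm
      · intro s _
        simp only [Finset.mem_filter, Finset.mem_univ, true_and]
        omega
      · intro j _
        exact Finset.mem_univ _
      · intro s _
        apply Fin.ext
        simp
      · intro j hj
        simp only [Finset.mem_filter, Finset.mem_univ, true_and] at hj
        apply Fin.ext
        simp
        omega
      · intro s _
        rfl
    rw [step2, Lf, Finset.mul_sum]
    refine Finset.sum_congr rfl fun s _ => ?_
    rw [hz_eq s]
    ring
  -- the high part
  have hhigh : ∏ a ∈ (univ.filter (fun a : Fin d → GaloisField p n => a ≠ 0)).filter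
      (fun a => ¬ ∃ j : Fin d, (j : ℕ) < i ∧ a j ≠ 0), Lf z a
        = Zi ^ ((p ^ n) ^ (d - i) - 1)
          * ∏ b ∈ univ.filter (fun b : Fin (d - i) → GaloisField p n => b ≠ 0), Lf wv b := by
    have hbij : ∏ a ∈ (univ.filter (fun a : Fin d → GaloisField p n => a ≠ 0)).filter
        (fun a => ¬ ∃ j : Fin d, (j : ℕ) < i ∧ a j ≠ 0), Lf z a
          = ∏ b ∈ univ.filter (fun b : Fin (d - i) → GaloisField p n => b ≠ 0),
              (Zi * Lf wv b) := by
      refine Finset.prod_nbij'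
        (fun a => fun s : Fin (d - i) => a ⟨i + (s : ℕ), by omega⟩)
        (fun b => fun j : Fin d =>
          if h : i ≤ (j : ℕ) then b ⟨(j : ℕ) - i, by omega⟩ else 0)
        ?_ ?_ ?_ ?_ ?_
      · intro a ha
        obtain ⟨h1, h2⟩ := (hmemHigh a).mp ha
        simp only [Finset.mem_filter, Finset.mem_univ, true_and]
        obtain ⟨j, hj⟩ := Function.ne_iff.mp h1
        have hij : i ≤ (j : ℕ) := by
          by_contra hc
          exact hj (by simpa using h2 j (by omega))
        refine Function.ne_iff.mpr ⟨⟨(j : ℕ) - i, by omega⟩, ?_⟩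
        beta_reduce
        have : (⟨i + ((j : ℕ) - i), by omega⟩ : Fin d) = j := by
          apply Fin.ext; simp; omega
        rw [this]
        simpa using hj
      · intro b hb
        have hb' : b ≠ 0 := by simpa using (Finset.mem_filter.mp hb).2
        refine (hmemHigh _).mpr ⟨?_, ?_⟩
        · obtain ⟨s, hs⟩ := Function.ne_iff.mp hb'
          refine Function.ne_iff.mpr ⟨⟨i + (s : ℕ), by omega⟩, ?_⟩
          beta_reduce
          rw [dif_pos (show i ≤ ((⟨i + (s : ℕ), by omega⟩ : Fin d) : ℕ) by simp)]
          have : (⟨i + (s : ℕ) - i, by omega⟩ : Fin (d - i)) = s := by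
            apply Fin.ext; simp
          rw [this]
          simpa using hs
        · intro j hj
          beta_reduce
          rw [dif_neg (show ¬ i ≤ (j : ℕ) by omega)]
      · intro a ha
        obtain ⟨h1, h2⟩ := (hmemHigh a).mp ha
        funext j
        beta_reduce
        by_cases hij : i ≤ (j : ℕ)
        · rw [dif_pos hij]
          congr 1
          apply Fin.ext; simp; omega
        · rw [dif_neg hij]
          exact (h2 j (by omega)).symm
      · intro b hb
        funext s
        beta_reduce
        rw [dif_pos (show i ≤ ((⟨i + (s : ℕ), by omega⟩ : Fin d) : ℕ) by simp)]
        congr 1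
        apply Fin.ext; simp
      · intro a ha
        obtain ⟨-, h2⟩ := (hmemHigh a).mp ha
        exact hpoint a h2
    rw [hbij, Finset.prod_mul_distrib, Finset.prod_const]
    congr 2
    rw [show (univ.filter fun b : Fin (d - i) → GaloisField p n => b ≠ 0) = univ.erase 0 from
        Finset.filter_ne' univ 0,
      Finset.card_erase_of_mem (mem_univ 0), Finset.card_univ, Fintype.card_fun,
      Fintype.card_fin, hcard]
  -- assemble
  refine ⟨u1 * u2⁻¹, mul_ne_zero hu1 (inv_ne_zero hu2), ?_⟩
  have hsplit : ∏ a ∈ univ.filter (fun a : Fin d → GaloisField p n => a ≠ 0), Lf z a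
      = (∏ a ∈ (univ.filter (fun a : Fin d → GaloisField p n => a ≠ 0)).filter
            (fun a => ¬ ∃ j : Fin d, (j : ℕ) < i ∧ a j ≠ 0), Lf z a)
        * ∏ a ∈ (univ.filter (fun a : Fin d → GaloisField p n => a ≠ 0)).filter
            (fun a => ∃ j : Fin d, (j : ℕ) < i ∧ a j ≠ 0), Lf z a := by
    rw [← Finset.prod_filter_mul_prod_filter_not
      (univ.filter (fun a : Fin d → GaloisField p n => a ≠ 0))
      (fun a => ∃ j : Fin d, (j : ℕ) < i ∧ a j ≠ 0) (Lf z), mul_comm]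
  rw [hlow, e1, e2, hsplit, hhigh]
  simp only [MvPolynomial.algebraMap_eq]
  have key : ∀ PW PL ZE : MvPolynomial (Fin (d-1)) (GaloisField p n),
      C u1 * (ZE * PW * PL) = C (u1 * u2⁻¹) * ZE * (C u2 * PW) * PL := by
    intro PW PL ZE
    have hC : (C (u1 * u2⁻¹) : MvPolynomial (Fin (d-1)) (GaloisField p n)) * C u2 = C u1 := by
      rw [← map_mul, mul_assoc, inv_mul_cancel₀ hu2, mul_one]
    linear_combination (-(ZE * PW * PL)) * hC
  exact key _ _ _
end

section
/- With δ_{d,i} defined as the product of a_0 + a_1 y_1 + ⋯ + a_{d-1} y_1⋯y_{d-1} over all nonzero (a_0,…,a_{d-1}) ∈ F_q^d having a_j ≠ 0 for some j < i, one has the congruence δ_{d,i} ≡ δ_i(y_1,…,y_{i-1})^{q^{d-i}} modulo the ideal (y_i) in F_q[y_1,…,y_{d-1}]. -/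
open MvPolynomial

/-- **Congruence for `δ_{d,i}`.**  In `F_q[y_1,…,y_{d-1}]`, the partial product `δ_{d,i}`
(product of `a_0 + a_1 y_1 + ⋯ + a_{d-1} y_1⋯y_{d-1}` over all nonzero `a ∈ F_q^d` with
`a_j ≠ 0` for some `j < i`) is congruent to `δ_i(y_1,…,y_{i-1})^{q^{d-i}}` modulo the
ideal `(y_i)`, where `δ_m` is the product of `a_0 + a_1 y_1 + ⋯ + a_{m-1} y_1⋯y_{m-1}`
over all nonzero `a ∈ F_q^m`. -/
theorem delta_di_congruence
    (p n d i : ℕ) [Fact p.Prime] (hn : 0 < n) (hi : 1 ≤ i) (hid : i ≤ d - 1) :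
    (∏ᶠ (a : Fin d → GaloisField p n)
        (_ : a ≠ 0 ∧ ∃ j : Fin d, (j : ℕ) < i ∧ a j ≠ 0),
      ∑ j : Fin d, C (a j) *
        ∏ t ∈ Finset.univ.filter (fun t : Fin (d-1) => (t : ℕ) < (j : ℕ)),
          (X t : MvPolynomial (Fin (d-1)) (GaloisField p n))) -
    (∏ᶠ (a : Fin i → GaloisField p n) (_ : a ≠ 0),
      ∑ j : Fin i, C (a j) *
        ∏ t ∈ Finset.univ.filter (fun t : Fin (d-1) => (t : ℕ) < (j : ℕ)),
          (X t : MvPolynomial (Fin (d-1)) (GaloisField p n))) ^ ((p ^ n) ^ (d - i)) ∈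
      Ideal.span {(X (⟨i - 1, by omega⟩ : Fin (d-1)) :
        MvPolynomial (Fin (d-1)) (GaloisField p n))} := by
  classical
  haveI : Fintype (GaloisField p n) := Fintype.ofFinite _
  have hd : 2 ≤ d := by omega
  have hidd : i ≤ d := by omega
  set v : Fin (d-1) := ⟨i - 1, by omega⟩ with hv
  set I : Ideal (MvPolynomial (Fin (d-1)) (GaloisField p n)) := Ideal.span {X v} with hI
  set F : (Fin d → GaloisField p n) → MvPolynomial (Fin (d-1)) (GaloisField p n) :=
    fun a => ∑ j : Fin d, C (a j) *
      ∏ t ∈ Finset.univ.filter (fun t : Fin (d-1) => (t : ℕ) < (j : ℕ)), X t with hF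
  set G : (Fin i → GaloisField p n) → MvPolynomial (Fin (d-1)) (GaloisField p n) :=
    fun b => ∑ j : Fin i, C (b j) *
      ∏ t ∈ Finset.univ.filter (fun t : Fin (d-1) => (t : ℕ) < (j : ℕ)), X t with hG
  set π : (Fin d → GaloisField p n) → (Fin i → GaloisField p n) :=
    fun a j => a (Fin.castLE hidd j) with hπ
  -- the condition in the first finprod is equivalent to `π a ≠ 0`
  have hcond : ∀ a : Fin d → GaloisField p n,
      (a ≠ 0 ∧ ∃ j : Fin d, (j : ℕ) < i ∧ a j ≠ 0) ↔ π a ≠ 0 := by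
    intro a
    constructor
    · rintro ⟨-, j, hj, hja⟩ h0
      apply hja
      have h1 : Fin.castLE hidd ⟨(j : ℕ), hj⟩ = j := Fin.ext rfl
      calc a j = a (Fin.castLE hidd ⟨(j : ℕ), hj⟩) := by rw [h1]
        _ = π a ⟨(j : ℕ), hj⟩ := rfl
        _ = 0 := by rw [h0]; rfl
    · intro h
      have : ∃ j : Fin i, a (Fin.castLE hidd j) ≠ 0 := by
        by_contra hc
        push_neg at hc
        exact h (funext fun j => hc j)
      obtain ⟨j, hj⟩ := this
      refine ⟨fun h0 => hj (by rw [h0]; rfl), Fin.castLE hidd j, by simp [Fin.is_lt j], hj⟩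
  -- convert the finprods to finite products
  have h1 : (∏ᶠ (a : Fin d → GaloisField p n)
      (_ : a ≠ 0 ∧ ∃ j : Fin d, (j : ℕ) < i ∧ a j ≠ 0), F a)
      = ∏ a ∈ Finset.univ.filter (fun a : Fin d → GaloisField p n => π a ≠ 0), F a :=
    finprod_cond_eq_prod_of_cond_iff _ (fun {a} _ => by
      rw [hcond a]; simp)
  have h2 : (∏ᶠ (b : Fin i → GaloisField p n) (_ : b ≠ 0), G b)
      = ∏ b ∈ Finset.univ.filter (fun b : Fin i → GaloisField p n => b ≠ 0), G b :=
    finprod_cond_eq_prod_of_cond_iff _ (fun {b} _ => by simp)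
  rw [h1, h2, ← Ideal.Quotient.eq_zero_iff_mem, map_sub, sub_eq_zero, map_prod, map_pow,
    map_prod]
  -- key step A: modulo (X v), each factor only depends on π a
  have keyA : ∀ a : Fin d → GaloisField p n,
      Ideal.Quotient.mk I (F a) = Ideal.Quotient.mk I (G (π a)) := by
    intro a
    have hsplit : F a =
        (∑ j ∈ Finset.univ.filter (fun j : Fin d => (j : ℕ) < i),
          C (a j) * ∏ t ∈ Finset.univ.filter (fun t : Fin (d-1) => (t : ℕ) < (j : ℕ)), X t)
        + ∑ j ∈ Finset.univ.filter (fun j : Fin d => ¬ (j : ℕ) < i),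
          C (a j) * ∏ t ∈ Finset.univ.filter (fun t : Fin (d-1) => (t : ℕ) < (j : ℕ)), X t :=
      (Finset.sum_filter_add_sum_filter_not _ _ _).symm
    have hzero : Ideal.Quotient.mk I
        (∑ j ∈ Finset.univ.filter (fun j : Fin d => ¬ (j : ℕ) < i),
          C (a j) * ∏ t ∈ Finset.univ.filter (fun t : Fin (d-1) => (t : ℕ) < (j : ℕ)), X t)
        = 0 := by
      rw [map_sum]
      apply Finset.sum_eq_zero
      intro j hj
      simp only [Finset.mem_filter, Finset.mem_univ, true_and, not_lt] at hj
      have hmem : v ∈ Finset.univ.filter (fun t : Fin (d-1) => (t : ℕ) < (j : ℕ)) := by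
        simp only [Finset.mem_filter, Finset.mem_univ, true_and, hv]
        show i - 1 < (j : ℕ)
        omega
      rw [map_mul]
      have : Ideal.Quotient.mk I
          (∏ t ∈ Finset.univ.filter (fun t : Fin (d-1) => (t : ℕ) < (j : ℕ)), X t) = 0 := by
        rw [Ideal.Quotient.eq_zero_iff_mem, hI, Ideal.mem_span_singleton]
        exact Finset.dvd_prod_of_mem _ hmem
      rw [this, mul_zero]
    rw [hsplit, map_add, hzero, add_zero]
    congr 1
    have hset : Finset.univ.filter (fun j : Fin d => (j : ℕ) < i)
        = Finset.univ.map ⟨Fin.castLE hidd, Fin.castLE_injective hidd⟩ := by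
      ext j
      simp only [Finset.mem_filter, Finset.mem_univ, true_and, Finset.mem_map,
        Function.Embedding.coeFn_mk]
      constructor
      · intro hj
        exact ⟨⟨(j : ℕ), hj⟩, Fin.ext rfl⟩
      · rintro ⟨j', rfl⟩
        simpa using Fin.is_lt j'
    rw [hset, Finset.sum_map, hG]
    rfl
  -- key step B: group the fibers of π
  have hdi : i + (d - i) = d := by omega
  set e0 : Fin d ≃ Fin i ⊕ Fin (d - i) := (finSumFinEquiv.trans (finCongr hdi)).symm with he0
  set e : (Fin d → GaloisField p n) ≃
      (Fin i → GaloisField p n) × (Fin (d - i) → GaloisField p n) :=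
    (Equiv.arrowCongr e0.symm (Equiv.refl (GaloisField p n))).symm.trans
      (Equiv.sumArrowEquivProdArrow _ _ (GaloisField p n)) with he
  have he1 : ∀ a : Fin d → GaloisField p n, (e a).1 = π a := by
    intro a
    funext j
    show a (e0.symm (Sum.inl j)) = a (Fin.castLE hidd j)
    congr 1
  calc ∏ a ∈ Finset.univ.filter (fun a : Fin d → GaloisField p n => π a ≠ 0),
        Ideal.Quotient.mk I (F a)
      = ∏ a ∈ Finset.univ.filter (fun a : Fin d → GaloisField p n => π a ≠ 0),
        Ideal.Quotient.mk I (G (π a)) := Finset.prod_congr rfl fun a _ => keyA a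
    _ = ∏ x ∈ Finset.univ.filter
          (fun x : (Fin i → GaloisField p n) × (Fin (d - i) → GaloisField p n) => x.1 ≠ 0),
        Ideal.Quotient.mk I (G x.1) := by
        apply Finset.prod_equiv e
        · intro a
          simp [he1 a]
        · intro a _
          rw [he1 a]
    _ = ∏ x ∈ (Finset.univ.filter (fun b : Fin i → GaloisField p n => b ≠ 0)) ×ˢ
          Finset.univ,
        Ideal.Quotient.mk I (G x.1) := by
        congr 1
        ext x
        simp
    _ = ∏ b ∈ Finset.univ.filter (fun b : Fin i → GaloisField p n => b ≠ 0),
        (Ideal.Quotient.mk I (G b)) ^ ((p ^ n) ^ (d - i)) := by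
        rw [Finset.prod_product]
        apply Finset.prod_congr rfl
        intro b _
        have hconst : ∀ y : Fin (d - i) → GaloisField p n, ((b, y).1 : Fin i → GaloisField p n) = b :=
          fun _ => rfl
        simp only [hconst]
        rw [Finset.prod_const, Finset.card_univ]
        congr 1
        rw [Fintype.card_fun, Fintype.card_fin]
        congr 1
        have := GaloisField.card p n hn.ne'
        rwa [Nat.card_eq_fintype_card] at this
    _ = (∏ b ∈ Finset.univ.filter (fun b : Fin i → GaloisField p n => b ≠ 0),
        Ideal.Quotient.mk I (G b)) ^ ((p ^ n) ^ (d - i)) := by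
        rw [Finset.prod_pow]
end

section
/- Let u be a d×d upper unitriangular matrix over an algebraically closed field containing F_q whose columns are denoted u_d,…,u_1 (u_i having 1 in position d+1-i and entries u_{1,i},…,u_{d-i,i} above it). Suppose for each 1 ≤ i ≤ d-1 the relations v_i = u_{d-i,i}^q − u_{d-i,i} ≠ 0 and F(u_i) − u_i = v_i · u_{i+1} hold, where F raises each entry to the q-th power. Then the entire matrix u is uniquely determined by its last column u_1. -/
/-- The Lusztig conditions on an upper unitriangular `d × d` matrix `u`: writing
`u_i` for the `(d+1-i)`-th column (0-based index `d-i`), for each `1 ≤ i ≤ d-1` one has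
`v_i := u_{d-i,i}^q - u_{d-i,i} ≠ 0` and `F(u_i) - u_i = v_i • u_{i+1}`, where `F` is the
entrywise `q`-power Frobenius. -/
def LusztigCond (q d : ℕ) {K : Type*} [Field K] (u : Matrix (Fin d) (Fin d) K) : Prop :=
  (∀ r c : Fin d, (c : ℕ) < (r : ℕ) → u r c = 0) ∧
  (∀ r : Fin d, u r r = 1) ∧
  ∀ i : ℕ, ∀ _ : 1 ≤ i, ∀ _ : i ≤ d - 1,
    ((u ⟨d - i - 1, by omega⟩ ⟨d - i, by omega⟩) ^ q -
        u ⟨d - i - 1, by omega⟩ ⟨d - i, by omega⟩ ≠ 0) ∧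
    ∀ r : Fin d,
      (u r ⟨d - i, by omega⟩) ^ q - u r ⟨d - i, by omega⟩ =
        ((u ⟨d - i - 1, by omega⟩ ⟨d - i, by omega⟩) ^ q -
            u ⟨d - i - 1, by omega⟩ ⟨d - i, by omega⟩) * u r ⟨d - i - 1, by omega⟩

/-- **Determination by the last column.**  An upper unitriangular matrix `u` over an
algebraically closed field `K ⊇ F_q` of characteristic `p` satisfying the Lusztig
conditions is completely determined by its last column. -/
theorem lusztig_matrix_determined_by_last_column
    (p n d : ℕ) [Fact p.Prime] (hn : 0 < n) (hd : 0 < d)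
    (K : Type*) [Field K] [IsAlgClosed K] [CharP K p] [Algebra (GaloisField p n) K]
    (u u' : Matrix (Fin d) (Fin d) K)
    (hu : LusztigCond (p ^ n) d u) (hu' : LusztigCond (p ^ n) d u')
    (hcol : ∀ r : Fin d, u r ⟨d - 1, by omega⟩ = u' r ⟨d - 1, by omega⟩) :
    u = u' := by
  obtain ⟨-, -, h3⟩ := hu
  obtain ⟨-, -, h3'⟩ := hu'
  have key : ∀ i : ℕ, ∀ h1 : 1 ≤ i, ∀ h2 : i ≤ d, ∀ r : Fin d,
      u r ⟨d - i, by omega⟩ = u' r ⟨d - i, by omega⟩ := by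
    intro i
    induction i with
    | zero => omega
    | succ i ih =>
      intro _ hle r
      rcases Nat.eq_zero_or_pos i with h0 | hpos
      · subst h0; exact hcol r
      · have hid : i ≤ d - 1 := by omega
        obtain ⟨hv, hrel⟩ := h3 i hpos hid
        obtain ⟨hv', hrel'⟩ := h3' i hpos hid
        have hprev : ∀ r : Fin d, u r ⟨d - i, by omega⟩ = u' r ⟨d - i, by omega⟩ :=
          ih hpos (by omega)
        have hveq : u ⟨d - i - 1, by omega⟩ ⟨d - i, by omega⟩ =
            u' ⟨d - i - 1, by omega⟩ ⟨d - i, by omega⟩ := hprev _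
        have key2 : (u ⟨d - i - 1, by omega⟩ ⟨d - i, by omega⟩ ^ (p ^ n) -
            u ⟨d - i - 1, by omega⟩ ⟨d - i, by omega⟩) * u r ⟨d - i - 1, by omega⟩ =
            (u ⟨d - i - 1, by omega⟩ ⟨d - i, by omega⟩ ^ (p ^ n) -
            u ⟨d - i - 1, by omega⟩ ⟨d - i, by omega⟩) * u' r ⟨d - i - 1, by omega⟩ := by
          rw [← hrel r, hprev r, hrel' r, ← hveq]
        have := mul_left_cancel₀ hv key2
        show u r ⟨d - (i + 1), by omega⟩ = u' r ⟨d - (i + 1), by omega⟩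
        convert this using 3 <;> omega
  funext r c
  have h := key (d - c) (by omega) (by omega) r
  have hc : (⟨d - (d - (c : ℕ)), by omega⟩ : Fin d) = c := by
    apply Fin.ext; simp; omega
  rwa [hc] at h
end

section
/- Define recursively in the field of rational functions F_q(y_1,…,y_{d-1}): a_{j,1} = (1 − (y_j⋯y_{d-1})^{q-1})/(1 − y_{d-1}^{q-1}) for 1 ≤ j ≤ d−2, and a_{j,k} = (a_{j,k-1}^q − (y_j⋯y_{d-k})^{q^k−q^{k-1}} a_{j,k-1}) / (a_{d-k,k-1}^q − y_{d-k}^{q^k−q^{k-1}} a_{d-k,k-1}) for 1 ≤ j ≤ d−k−1. Then for each j ∈ {1,…,i−1}, a_{j,d-i} can be written as (1 + f)/(1 + g) with f, g polynomials in F_q[y_j,…,y_{d-1}] lying in the ideal (y_j,…,y_{d-1}); in particular, for every n with j ≤ n ≤ d−1, the y_n-adic valuation of a_{j,d-i} is 0. -/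
open MvPolynomial

/-- The rational function field `F_q(y_1,…,y_{d-1})`. -/
abbrev RatField (p n d : ℕ) [Fact p.Prime] :=
  FractionRing (MvPolynomial (Fin (d - 1)) (GaloisField p n))

/-- The variable `y_m` (`1 ≤ m ≤ d-1`) viewed in `F_q(y_1,…,y_{d-1})`. -/
noncomputable def yv (p n d : ℕ) [Fact p.Prime] (m : ℕ) : RatField p n d :=
  if h : 1 ≤ m ∧ m ≤ d - 1 then
    algebraMap (MvPolynomial (Fin (d - 1)) (GaloisField p n)) (RatField p n d)
      (X ⟨m - 1, by omega⟩)
  else 0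

/-- The product `y_j ⋯ y_k`. -/
noncomputable def prodY (p n d : ℕ) [Fact p.Prime] (j k : ℕ) : RatField p n d :=
  ∏ t ∈ Finset.Icc j k, yv p n d t

/-- The recursively defined rational functions `a_{j,k}`:
`a_{j,1} = (1 − (y_j⋯y_{d-1})^{q-1})/(1 − y_{d-1}^{q-1})` and
`a_{j,k} = (a_{j,k-1}^q − (y_j⋯y_{d-k})^{q^k−q^{k-1}} a_{j,k-1}) /
(a_{d-k,k-1}^q − y_{d-k}^{q^k−q^{k-1}} a_{d-k,k-1})`, with `q = p^n`. -/
noncomputable def aRec (p n d : ℕ) [Fact p.Prime] : ℕ → ℕ → RatField p n d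
  | _, 0 => 0
  | j, 1 => (1 - (prodY p n d j (d - 1)) ^ (p ^ n - 1)) /
      (1 - (yv p n d (d - 1)) ^ (p ^ n - 1))
  | j, (k + 2) =>
      ((aRec p n d j (k + 1)) ^ (p ^ n) -
          (prodY p n d j (d - (k + 2))) ^ ((p ^ n) ^ (k + 2) - (p ^ n) ^ (k + 1)) *
            aRec p n d j (k + 1)) /
      ((aRec p n d (d - (k + 2)) (k + 1)) ^ (p ^ n) -
          (yv p n d (d - (k + 2))) ^ ((p ^ n) ^ (k + 2) - (p ^ n) ^ (k + 1)) *
            aRec p n d (d - (k + 2)) (k + 1))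


noncomputable def pX (p n d : ℕ) [Fact p.Prime] (m : ℕ) :
    MvPolynomial (Fin (d - 1)) (GaloisField p n) :=
  if h : 1 ≤ m ∧ m ≤ d - 1 then X ⟨m - 1, by omega⟩ else 0

lemma yv_eq_pX (p n d : ℕ) [Fact p.Prime] (m : ℕ) :
    yv p n d m = algebraMap _ (RatField p n d) (pX p n d m) := by
  unfold yv pX; split <;> simp

lemma prodY_eq (p n d : ℕ) [Fact p.Prime] (j k : ℕ) :
    prodY p n d j k
      = algebraMap _ (RatField p n d) (∏ t ∈ Finset.Icc j k, pX p n d t) := by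
  unfold prodY; rw [map_prod]; exact Finset.prod_congr rfl fun t _ => yv_eq_pX p n d t

lemma pX_mem (p n d : ℕ) [Fact p.Prime] (j t : ℕ) (h1 : 1 ≤ j) (hjt : j ≤ t)
    (ht : t ≤ d - 1) :
    pX p n d t ∈
      (X '' {u : Fin (d - 1) | j ≤ (u : ℕ) + 1} :
        Set (MvPolynomial (Fin (d - 1)) (GaloisField p n))) := by
  rw [pX, dif_pos ⟨by omega, ht⟩]
  exact ⟨⟨t - 1, by omega⟩, by simp only [Set.mem_setOf_eq]; omega, rfl⟩

lemma cc_zero {σ : Type*} {R : Type*} [CommRing R] (S : Set σ) {f : MvPolynomial σ R}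
    (hf : f ∈ Ideal.span (X '' S)) : constantCoeff f = 0 := by
  have h : Ideal.span (X '' S) ≤ RingHom.ker (constantCoeff (R := R) (σ := σ)) := by
    rw [Ideal.span_le]
    rintro _ ⟨i, -, rfl⟩
    simp [RingHom.mem_ker]
  exact h hf

lemma mul_sub_one_mem {R : Type*} [CommRing R] {I : Ideal R} {a b : R}
    (ha : a - 1 ∈ I) (hb : b - 1 ∈ I) : a * b - 1 ∈ I := by
  have h : a * b - 1 = a * (b - 1) + (a - 1) := by ring
  rw [h]; exact I.add_mem (Ideal.mul_mem_left _ _ hb) ha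

lemma pow_sub_one_mem {R : Type*} [CommRing R] {I : Ideal R} {a : R}
    (ha : a - 1 ∈ I) : ∀ m : ℕ, a ^ m - 1 ∈ I
  | 0 => by simpa using I.zero_mem
  | (m + 1) => by
      rw [pow_succ]; exact mul_sub_one_mem (pow_sub_one_mem ha m) ha

set_option maxHeartbeats 2000000 in
set_option synthInstance.maxHeartbeats 400000 in
lemma key (p n d : ℕ) [Fact p.Prime] (hn : 0 < n) (hd : 2 ≤ d) :
    ∀ k, 1 ≤ k → ∀ j, 1 ≤ j → j + k + 1 ≤ d →
    ∃ f g : MvPolynomial (Fin (d - 1)) (GaloisField p n),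
      f ∈ Ideal.span (X '' {t : Fin (d - 1) | j ≤ (t : ℕ) + 1}) ∧
      g ∈ Ideal.span (X '' {t : Fin (d - 1) | j ≤ (t : ℕ) + 1}) ∧
      f ∈ supported (GaloisField p n) {t : Fin (d - 1) | j ≤ (t : ℕ) + 1} ∧
      g ∈ supported (GaloisField p n) {t : Fin (d - 1) | j ≤ (t : ℕ) + 1} ∧
      aRec p n d j k =
        algebraMap _ (RatField p n d) (1 + f) / algebraMap _ (RatField p n d) (1 + g) := by
  have hp : 1 < p := (Fact.out : p.Prime).one_lt
  have hq2 : 1 < p ^ n := Nat.one_lt_pow (by omega) hp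
  intro k hk
  induction k, hk using Nat.le_induction with
  | base =>
    intro j hj hjd
    refine ⟨-((∏ t ∈ Finset.Icc j (d - 1), pX p n d t) ^ (p ^ n - 1)),
      -((pX p n d (d - 1)) ^ (p ^ n - 1)), ?_, ?_, ?_, ?_, ?_⟩
    · refine neg_mem (Ideal.pow_mem_of_mem _ ?_ _ (by omega))
      rw [Finset.prod_eq_mul_prod_sdiff_singleton_of_mem (Finset.mem_Icc.mpr ⟨le_rfl, by omega⟩)]
      exact Ideal.mul_mem_right _ _
        (Ideal.subset_span (pX_mem p n d j j hj le_rfl (by omega)))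
    · exact neg_mem (Ideal.pow_mem_of_mem _
        (Ideal.subset_span (pX_mem p n d j (d - 1) hj (by omega) le_rfl)) _ (by omega))
    · exact neg_mem (pow_mem (prod_mem fun t ht => Algebra.subset_adjoin
        (pX_mem p n d j t hj (Finset.mem_Icc.mp ht).1 (Finset.mem_Icc.mp ht).2)) _)
    · exact neg_mem (pow_mem (Algebra.subset_adjoin
        (pX_mem p n d j (d - 1) hj (by omega) le_rfl)) _)
    · have hrw : ∀ h : MvPolynomial (Fin (d - 1)) (GaloisField p n), algebraMap (MvPolynomial (Fin (d - 1)) (GaloisField p n)) (RatField p n d) (1 + -(h ^ (p ^ n - 1)))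
          = 1 - (algebraMap (MvPolynomial (Fin (d - 1)) (GaloisField p n)) (RatField p n d) h) ^ (p ^ n - 1) := by
        intro h
        rw [map_add, map_one, map_neg, map_pow, sub_eq_add_neg]
      simp only [aRec]
      rw [prodY_eq, yv_eq_pX, hrw, hrw]
  | succ k hk ih =>
    intro j hj hjd
    obtain ⟨k', rfl⟩ : ∃ k', k = k' + 1 := ⟨k - 1, by omega⟩
    obtain ⟨f, g, hfI, hgI, hfS, hgS, hE⟩ := ih j hj (by omega)
    obtain ⟨f', g', hf'I, hg'I, hf'S, hg'S, hE'⟩ :=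
      ih (d - (k' + 2)) (by omega) (by omega)
    have hsub : {t : Fin (d - 1) | d - (k' + 2) ≤ (t : ℕ) + 1}
        ⊆ {t : Fin (d - 1) | j ≤ (t : ℕ) + 1} := fun t ht => by
      simp only [Set.mem_setOf_eq] at *; omega
    replace hf'I := Ideal.span_mono (Set.image_mono hsub) hf'I
    replace hg'I := Ideal.span_mono (Set.image_mono hsub) hg'I
    replace hf'S := supported_mono hsub hf'S
    replace hg'S := supported_mono hsub hg'S
    have he1 : (p ^ n) ^ (k' + 2) - (p ^ n) ^ (k' + 1) ≠ 0 := by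
      have : (p ^ n) ^ (k' + 1) < (p ^ n) ^ (k' + 2) :=
        Nat.pow_lt_pow_right hq2 (by omega)
      omega
    set q : ℕ := p ^ n with hqdef
    set e : ℕ := q ^ (k' + 2) - q ^ (k' + 1) with hedef
    have hcPI : (∏ t ∈ Finset.Icc j (d - (k' + 2)), pX p n d t) ^ e
        ∈ Ideal.span (X '' {t : Fin (d - 1) | j ≤ (t : ℕ) + 1}) := by
      refine Ideal.pow_mem_of_mem _ ?_ _ (by omega)
      rw [Finset.prod_eq_mul_prod_sdiff_singleton_of_mem (Finset.mem_Icc.mpr ⟨le_rfl, by omega⟩)]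
      exact Ideal.mul_mem_right _ _
        (Ideal.subset_span (pX_mem p n d j j hj le_rfl (by omega)))
    have hc'PI : (pX p n d (d - (k' + 2))) ^ e
        ∈ Ideal.span (X '' {t : Fin (d - 1) | j ≤ (t : ℕ) + 1}) :=
      Ideal.pow_mem_of_mem _
        (Ideal.subset_span (pX_mem p n d j (d - (k' + 2)) hj (by omega) (by omega)))
        _ (by omega)
    have hcPS : (∏ t ∈ Finset.Icc j (d - (k' + 2)), pX p n d t) ^ e
        ∈ supported (GaloisField p n) {t : Fin (d - 1) | j ≤ (t : ℕ) + 1} :=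
      pow_mem (prod_mem fun t ht => Algebra.subset_adjoin
        (pX_mem p n d j t hj (Finset.mem_Icc.mp ht).1 (by
          have := (Finset.mem_Icc.mp ht).2; omega))) _
    have hc'PS : (pX p n d (d - (k' + 2))) ^ e
        ∈ supported (GaloisField p n) {t : Fin (d - 1) | j ≤ (t : ℕ) + 1} :=
      pow_mem (Algebra.subset_adjoin
        (pX_mem p n d j (d - (k' + 2)) hj (by omega) (by omega))) _
    -- abbreviations
    set cP : MvPolynomial (Fin (d - 1)) (GaloisField p n) := (∏ t ∈ Finset.Icc j (d - (k' + 2)), pX p n d t) ^ e with hcPdef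
    set c'P : MvPolynomial (Fin (d - 1)) (GaloisField p n) := (pX p n d (d - (k' + 2))) ^ e with hc'Pdef
    set N : MvPolynomial (Fin (d - 1)) (GaloisField p n) := (1 + f) ^ q * (1 + g) - cP * ((1 + f) * (1 + g) ^ q) with hNdef
    set M : MvPolynomial (Fin (d - 1)) (GaloisField p n) := (1 + f') ^ q * (1 + g') - c'P * ((1 + f') * (1 + g') ^ q) with hMdef
    -- constant coefficients
    have ccf := cc_zero _ hfI
    have ccg := cc_zero _ hgI
    have ccf' := cc_zero _ hf'I
    have ccg' := cc_zero _ hg'I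
    have ccc'P := cc_zero _ hc'PI
    have inj : Function.Injective (algebraMap (MvPolynomial (Fin (d - 1)) (GaloisField p n)) (RatField p n d)) :=
      IsFractionRing.injective (MvPolynomial (Fin (d - 1)) (GaloisField p n)) (RatField p n d)
    have phine : ∀ h : MvPolynomial (Fin (d - 1)) (GaloisField p n), constantCoeff h ≠ 0 → algebraMap (MvPolynomial (Fin (d - 1)) (GaloisField p n)) (RatField p n d) h ≠ 0 := by
      intro h hcc h0
      exact hcc (by rw [inj (by rw [h0, map_zero] : algebraMap (MvPolynomial (Fin (d - 1)) (GaloisField p n)) (RatField p n d) h = algebraMap (MvPolynomial (Fin (d - 1)) (GaloisField p n)) (RatField p n d) 0), map_zero])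
    have hb : algebraMap (MvPolynomial (Fin (d - 1)) (GaloisField p n)) (RatField p n d) (1 + g) ≠ 0 := phine _ (by simp [map_add, ccg])
    have hb' : algebraMap (MvPolynomial (Fin (d - 1)) (GaloisField p n)) (RatField p n d) (1 + g') ≠ 0 := phine _ (by simp [map_add, ccg'])
    have hMne : algebraMap (MvPolynomial (Fin (d - 1)) (GaloisField p n)) (RatField p n d) M ≠ 0 := phine _ (by
      simp [hMdef, map_sub, map_mul, map_pow, map_add, ccf', ccg', ccc'P])
    -- ideal membership of F and G
    refine ⟨N * (1 + g') ^ (q + 1) - 1, M * (1 + g) ^ (q + 1) - 1, ?_, ?_, ?_, ?_, ?_⟩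
    · refine mul_sub_one_mem ?_ (pow_sub_one_mem (by simpa using hg'I) _)
      have h : N - 1 = ((1 + f) ^ q * (1 + g) - 1)
          - cP * ((1 + f) * (1 + g) ^ q) := by rw [hNdef]; ring
      rw [h]
      exact Ideal.sub_mem _
        (mul_sub_one_mem (pow_sub_one_mem (by simpa using hfI) _) (by simpa using hgI))
        (Ideal.mul_mem_right _ _ hcPI)
    · refine mul_sub_one_mem ?_ (pow_sub_one_mem (by simpa using hgI) _)
      have h : M - 1 = ((1 + f') ^ q * (1 + g') - 1)
          - c'P * ((1 + f') * (1 + g') ^ q) := by rw [hMdef]; ring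
      rw [h]
      exact Ideal.sub_mem _
        (mul_sub_one_mem (pow_sub_one_mem (by simpa using hf'I) _) (by simpa using hg'I))
        (Ideal.mul_mem_right _ _ hc'PI)
    · exact sub_mem (mul_mem (sub_mem
        (mul_mem (pow_mem (add_mem (one_mem _) hfS) _) (add_mem (one_mem _) hgS))
        (mul_mem hcPS (mul_mem (add_mem (one_mem _) hfS)
          (pow_mem (add_mem (one_mem _) hgS) _))))
        (pow_mem (add_mem (one_mem _) hg'S) _)) (one_mem _)
    · exact sub_mem (mul_mem (sub_mem
        (mul_mem (pow_mem (add_mem (one_mem _) hf'S) _) (add_mem (one_mem _) hg'S))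
        (mul_mem hc'PS (mul_mem (add_mem (one_mem _) hf'S)
          (pow_mem (add_mem (one_mem _) hg'S) _))))
        (pow_mem (add_mem (one_mem _) hgS) _)) (one_mem _)
    · -- the field computation
      simp only [aRec]
      rw [hE, hE', prodY_eq, yv_eq_pX, ← hqdef, ← hedef]
      have hdivlem : ∀ a b cc : RatField p n d, b ≠ 0 →
          (a / b) ^ q - cc * (a / b) = (a ^ q * b - cc * (a * b ^ q)) / b ^ (q + 1) := by
        intro a b cc hb0
        rw [eq_div_iff (pow_ne_zero _ hb0)]
        have hab : a / b * b = a := div_mul_cancel₀ a hb0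
        calc ((a / b) ^ q - cc * (a / b)) * b ^ (q + 1)
            = (a / b * b) ^ q * b - cc * ((a / b * b) * b ^ q) := by ring
          _ = a ^ q * b - cc * (a * b ^ q) := by rw [hab]
      have h1 : (algebraMap (MvPolynomial (Fin (d - 1)) (GaloisField p n)) (RatField p n d) (1 + f) / algebraMap (MvPolynomial (Fin (d - 1)) (GaloisField p n)) (RatField p n d) (1 + g)) ^ q
          - (algebraMap (MvPolynomial (Fin (d - 1)) (GaloisField p n)) (RatField p n d) (∏ t ∈ Finset.Icc j (d - (k' + 2)), pX p n d t)) ^ e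
            * (algebraMap (MvPolynomial (Fin (d - 1)) (GaloisField p n)) (RatField p n d) (1 + f) / algebraMap (MvPolynomial (Fin (d - 1)) (GaloisField p n)) (RatField p n d) (1 + g))
          = algebraMap (MvPolynomial (Fin (d - 1)) (GaloisField p n)) (RatField p n d) N / (algebraMap (MvPolynomial (Fin (d - 1)) (GaloisField p n)) (RatField p n d) (1 + g)) ^ (q + 1) := by
        rw [hNdef, hcPdef]
        simp only [map_sub, map_mul, map_pow]
        exact hdivlem _ _ _ hb
      have h2 : (algebraMap (MvPolynomial (Fin (d - 1)) (GaloisField p n)) (RatField p n d) (1 + f') / algebraMap (MvPolynomial (Fin (d - 1)) (GaloisField p n)) (RatField p n d) (1 + g')) ^ q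
          - (algebraMap (MvPolynomial (Fin (d - 1)) (GaloisField p n)) (RatField p n d) (pX p n d (d - (k' + 2)))) ^ e
            * (algebraMap (MvPolynomial (Fin (d - 1)) (GaloisField p n)) (RatField p n d) (1 + f') / algebraMap (MvPolynomial (Fin (d - 1)) (GaloisField p n)) (RatField p n d) (1 + g'))
          = algebraMap (MvPolynomial (Fin (d - 1)) (GaloisField p n)) (RatField p n d) M / (algebraMap (MvPolynomial (Fin (d - 1)) (GaloisField p n)) (RatField p n d) (1 + g')) ^ (q + 1) := by
        rw [hMdef, hc'Pdef]
        simp only [map_sub, map_mul, map_pow]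
        exact hdivlem _ _ _ hb' 
      have key4 : ∀ x y u v : RatField p n d,
          (x / u) / (y / v) = (x * v) / (y * u) := by
        intro x y u v
        calc (x / u) / (y / v) = x / u * (v / y) := by
              rw [div_eq_mul_inv (x / u), inv_div]
          _ = (x * v) / (u * y) := div_mul_div_comm x u v y
          _ = (x * v) / (y * u) := by rw [mul_comm u y]
      rw [h1, h2, key4,
        show (1 : MvPolynomial (Fin (d - 1)) (GaloisField p n)) + (N * (1 + g') ^ (q + 1) - 1) = N * (1 + g') ^ (q + 1) by ring,
        show (1 : MvPolynomial (Fin (d - 1)) (GaloisField p n)) + (M * (1 + g) ^ (q + 1) - 1) = M * (1 + g) ^ (q + 1) by ring,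
        map_mul, map_pow, map_mul, map_pow]

/-- **Unit-valuation form of `a_{j,d-i}`.**  For `1 ≤ j ≤ i-1`, the rational function
`a_{j,d-i}` can be written `(1+f)/(1+g)` with `f, g` polynomials in the variables
`y_j,…,y_{d-1}` lying in the ideal `(y_j,…,y_{d-1})`; in particular for every
`j ≤ m ≤ d-1` the `y_m`-adic valuation of `a_{j,d-i}` is `0`, i.e. `a_{j,d-i}` is a
ratio of two polynomials neither of which is divisible by `y_m`. -/
theorem aRec_unit_valuation
    (p n d i : ℕ) [Fact p.Prime] (hn : 0 < n) (hd : 2 ≤ d)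
    (hi : 1 ≤ i) (hid : i ≤ d - 1) :
    ∀ j : ℕ, 1 ≤ j → j ≤ i - 1 →
      (∃ f g : MvPolynomial (Fin (d - 1)) (GaloisField p n),
        f ∈ Ideal.span (X '' {t : Fin (d - 1) | j ≤ (t : ℕ) + 1}) ∧
        g ∈ Ideal.span (X '' {t : Fin (d - 1) | j ≤ (t : ℕ) + 1}) ∧
        (∀ t ∈ f.vars, j ≤ (t : ℕ) + 1) ∧ (∀ t ∈ g.vars, j ≤ (t : ℕ) + 1) ∧
        aRec p n d j (d - i) =
          algebraMap (MvPolynomial (Fin (d - 1)) (GaloisField p n)) (RatField p n d) (1 + f) /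
            algebraMap (MvPolynomial (Fin (d - 1)) (GaloisField p n)) (RatField p n d) (1 + g)) ∧
      ∀ m : ℕ, ∀ _ : j ≤ m, ∀ _ : m ≤ d - 1,
        ∃ A B : MvPolynomial (Fin (d - 1)) (GaloisField p n),
          ¬ (X ⟨m - 1, by omega⟩ ∣ A) ∧ ¬ (X ⟨m - 1, by omega⟩ ∣ B) ∧
          aRec p n d j (d - i) =
            algebraMap (MvPolynomial (Fin (d - 1)) (GaloisField p n)) (RatField p n d) A /
              algebraMap (MvPolynomial (Fin (d - 1)) (GaloisField p n)) (RatField p n d) B := by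
  intro j hj hji
  obtain ⟨f, g, hfI, hgI, hfS, hgS, hE⟩ :=
    key p n d hn hd (d - i) (by omega) j hj (by omega)
  have hX : ∀ h : MvPolynomial (Fin (d - 1)) (GaloisField p n),
      h ∈ Ideal.span (X '' {t : Fin (d - 1) | j ≤ (t : ℕ) + 1}) →
      ∀ u : Fin (d - 1), ¬ X u ∣ (1 + h) := by
    intro h hI u hdvd
    obtain ⟨c, hc⟩ := hdvd
    have h1 : constantCoeff (1 + h) = 1 := by
      rw [map_add, map_one, cc_zero _ hI, add_zero]
    rw [hc, map_mul, constantCoeff_X, zero_mul] at h1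
    exact one_ne_zero h1.symm
  refine ⟨⟨f, g, hfI, hgI, ?_, ?_, hE⟩, ?_⟩
  · intro t ht
    exact (mem_supported.mp hfS) (Finset.mem_coe.mpr ht)
  · intro t ht
    exact (mem_supported.mp hgS) (Finset.mem_coe.mpr ht)
  · intro m hm hmd
    exact ⟨1 + f, 1 + g, hX f hfI _, hX g hgI _, hE⟩
end

section
/- The map φ : A^{d-1} → P^{d-1} given by (y_1,…,y_{d-1}) ↦ [1 : y_1 : y_1y_2 : ⋯ : y_1⋯y_{d-1}] restricts to a bijection (isomorphism of varieties) from the open set {δ_d(y_1,…,y_{d-1}) ≠ 0} of affine space onto the Drinfeld space Ω^{d-1}, the complement in P^{d-1} of all F_q-rational hyperplanes. -/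
section Moore

variable (p n : ℕ) [Fact p.Prime] {K : Type*} [Field K] [CharP K p]
  [Algebra (GaloisField p n) K]

lemma GF_alg_pow (hn : 0 < n) (c : GaloisField p n) (k : ℕ) :
    (algebraMap (GaloisField p n) K c) ^ (p ^ n) ^ k = algebraMap (GaloisField p n) K c := by
  rw [← map_pow]
  congr 1
  haveI : Fintype (GaloisField p n) := Fintype.ofFinite _
  have hcard : Fintype.card (GaloisField p n) = p ^ n := by
    rw [← Nat.card_eq_fintype_card, GaloisField.card p n hn.ne']
  rw [← hcard]
  exact FiniteField.pow_card_pow k c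

lemma li_of_moore_det_ne_zero (hn : 0 < n) {m : ℕ} (v : Fin m → K)
    (h : (Matrix.of fun j k : Fin m => v j ^ (p ^ n) ^ (k : ℕ)).det ≠ 0) :
    LinearIndependent (GaloisField p n) v := by
  set M : Matrix (Fin m) (Fin m) K := Matrix.of fun j k : Fin m => v j ^ (p ^ n) ^ (k : ℕ) with hM
  rw [Fintype.linearIndependent_iff]
  intro c hc i
  set c' : Fin m → K := fun j => algebraMap (GaloisField p n) K (c j) with hc'
  have key : ∀ k : Fin m, ∑ j, c' j * M j k = 0 := by
    intro k
    have h1 : (∑ j, c j • v j) ^ p ^ (n * (k : ℕ)) = 0 := by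
      rw [hc]
      exact zero_pow (pow_ne_zero _ (Fact.out (p := p.Prime)).ne_zero)
    rw [sum_pow_char_pow] at h1
    rw [← h1]
    apply Finset.sum_congr rfl
    intro j _
    rw [Algebra.smul_def, mul_pow, pow_mul, GF_alg_pow p n hn]
    rfl
  have hvm : Matrix.vecMul c' M = 0 := by
    funext k
    show dotProduct c' (fun j => M j k) = 0
    rw [← key k]
    simp [dotProduct]
  have hc0 : c' = 0 := by
    have h2 := congrArg (fun w => Matrix.vecMul w M⁻¹) hvm
    simpa [Matrix.vecMul_vecMul, Matrix.mul_nonsing_inv M (Ne.isUnit h)] using h2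
  have h3 : c' i = 0 := congrFun hc0 i
  have h4 : algebraMap (GaloisField p n) K (c i) = algebraMap (GaloisField p n) K 0 := by
    simpa [hc'] using h3
  exact (algebraMap (GaloisField p n) K).injective h4

end Moore

section Moore2

variable (p n : ℕ) [Fact p.Prime] {K : Type*} [Field K] [CharP K p]
  [Algebra (GaloisField p n) K]

lemma sum_alg_mul_pow (hn : 0 < n) {ι : Type*} [Fintype ι] (c : ι → GaloisField p n)
    (w : ι → K) (k : ℕ) :
    (∑ i, algebraMap (GaloisField p n) K (c i) * w i) ^ (p ^ n) ^ k
      = ∑ i, algebraMap (GaloisField p n) K (c i) * w i ^ (p ^ n) ^ k := by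
  rw [← pow_mul, sum_pow_char_pow]
  apply Finset.sum_congr rfl
  intro i _
  rw [mul_pow, pow_mul p n k, GF_alg_pow p n hn]

lemma moore_det_ne_zero_of_li (hn : 0 < n) : ∀ (m : ℕ) (v : Fin m → K),
    LinearIndependent (GaloisField p n) v →
    (Matrix.of fun j k : Fin m => v j ^ (p ^ n) ^ (k : ℕ)).det ≠ 0 := by
  intro m
  induction m with
  | zero => intro v _; simp [Matrix.det_isEmpty]
  | succ m ih =>
    intro v hv
    classical
    set q := p ^ n with hq
    have hq2 : 2 ≤ q := by
      have h2 := (Fact.out (p := p.Prime)).two_le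
      calc 2 ≤ p := h2
        _ ≤ p ^ n := Nat.le_self_pow hn.ne' p
    have hv2 : LinearIndependent (GaloisField p n) (Fin.init v) ∧
        v (Fin.last m) ∉ Submodule.span (GaloisField p n) (Set.range (Fin.init v)) := by
      rw [← linearIndependent_fin_snoc, Fin.snoc_init_self]; exact hv
    have hD : (Matrix.of fun i j : Fin m => Fin.init v i ^ q ^ (j : ℕ)).det ≠ 0 := ih _ hv2.1
    set N : Matrix (Fin (m+1)) (Fin (m+1)) (Polynomial K) := Matrix.of fun j k =>
      if j = Fin.last m then Polynomial.X ^ q ^ (k : ℕ)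
      else Polynomial.C (v j ^ q ^ (k : ℕ)) with hN
    set f := N.det with hf
    have heval : ∀ x : K, Polynomial.eval x f =
        (Matrix.of fun j k : Fin (m+1) =>
          (if j = Fin.last m then x else v j) ^ q ^ (k : ℕ)).det := by
      intro x
      have h1 : Polynomial.eval x f = (N.map (Polynomial.evalRingHom x)).det := by
        rw [hf]; exact RingHom.map_det (Polynomial.evalRingHom x) N
      rw [h1]
      congr 1
      ext j k
      by_cases hj : j = Fin.last m <;> simp [hN, hj]
    set dmin : Fin (m+1) → K := fun k =>
      (Matrix.of fun i j : Fin m => Fin.init v i ^ q ^ ((k.succAbove j : ℕ))).det with hdmin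
    have hform : f = ∑ k : Fin (m+1),
        (-1) ^ ((m : ℕ) + (k : ℕ)) * Polynomial.X ^ q ^ (k : ℕ) * Polynomial.C (dmin k) := by
      rw [hf, Matrix.det_succ_row N (Fin.last m)]
      apply Finset.sum_congr rfl
      intro k _
      have hsub : N.submatrix (Fin.last m).succAbove k.succAbove =
          (Matrix.of fun i j : Fin m => Fin.init v i ^ q ^ ((k.succAbove j : ℕ))).map
            Polynomial.C := by
        ext i j
        simp [hN, Fin.succAbove_last, (Fin.castSucc_lt_last i).ne, Fin.init,
          Matrix.map_apply]
      have hsub' : (N.submatrix (Fin.last m).succAbove k.succAbove).det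
          = Polynomial.C (dmin k) := by
        rw [hsub]
        exact (RingHom.map_det Polynomial.C _).symm
      have hNl : N (Fin.last m) k = Polynomial.X ^ q ^ (k : ℕ) := by simp [hN]
      rw [hsub', hNl, Fin.val_last]
    have hcoeff : ∀ N' : ℕ, f.coeff N' =
        ∑ k : Fin (m+1), ((-1:K) ^ ((m:ℕ) + (k:ℕ)) * dmin k)
          * (if N' = q ^ (k:ℕ) then 1 else 0) := by
      intro N'
      rw [hform, Polynomial.finset_sum_coeff]
      apply Finset.sum_congr rfl
      intro k _
      have hC : ((-1 : Polynomial K)) ^ ((m:ℕ)+(k:ℕ))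
          = Polynomial.C ((-1:K) ^ ((m:ℕ)+(k:ℕ))) := by simp
      rw [hC, Polynomial.coeff_mul_C, Polynomial.coeff_C_mul, Polynomial.coeff_X_pow]
      by_cases h : N' = q ^ (k:ℕ) <;> simp [h, mul_comm]
    have hdeg : f.natDegree ≤ q ^ m := by
      rw [Polynomial.natDegree_le_iff_coeff_eq_zero]
      intro N' hN'
      rw [hcoeff]
      apply Finset.sum_eq_zero
      intro k _
      have hk : q ^ (k:ℕ) ≤ q ^ m := Nat.pow_le_pow_right (by omega) (by omega)
      rw [if_neg (by omega), mul_zero]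
    have hdlast : dmin (Fin.last m)
        = (Matrix.of fun i j : Fin m => Fin.init v i ^ q ^ (j:ℕ)).det := by
      have hmx : (Matrix.of fun i j : Fin m =>
            Fin.init v i ^ q ^ (((Fin.last m).succAbove j : ℕ)))
          = Matrix.of fun i j : Fin m => Fin.init v i ^ q ^ (j:ℕ) := by
        ext i j
        rw [Fin.succAbove_last]
        simp
      rw [hdmin]
      exact congrArg Matrix.det hmx
    have hlead : f.coeff (q ^ m) = dmin (Fin.last m) := by
      rw [hcoeff, Finset.sum_eq_single (Fin.last m)]
      · have hsgn : ((-1:K)) ^ ((m:ℕ) + (m:ℕ)) = 1 := by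
          rw [← two_mul, pow_mul, neg_one_sq, one_pow]
        simp [Fin.val_last, hsgn]
      · intro k _ hk
        have hkm : (k:ℕ) ≠ m := by
          intro hEq
          exact hk (Fin.ext (by simp [hEq, Fin.val_last]))
        rw [if_neg, mul_zero]
        intro hEq
        exact hkm (Nat.pow_right_injective hq2 hEq).symm
      · simp
    have hf0 : f ≠ 0 := by
      intro h0
      apply hD
      rw [← hdlast, ← hlead, h0, Polynomial.coeff_zero]
    haveI : Fintype (GaloisField p n) := Fintype.ofFinite _
    have hcardF : Fintype.card (GaloisField p n) = q := by
      rw [← Nat.card_eq_fintype_card, GaloisField.card p n hn.ne']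
    set S : Finset K := Finset.image
      (fun c : Fin m → GaloisField p n =>
        ∑ j, algebraMap (GaloisField p n) K (c j) * Fin.init v j) Finset.univ with hS
    have hScard : S.card = q ^ m := by
      rw [hS, Finset.card_image_of_injective _ ?_, Finset.card_univ, Fintype.card_fun,
        hcardF, Fintype.card_fin]
      intro c c' hcc
      have hz : ∑ j, (c j - c' j) • Fin.init v j = 0 := by
        simp only [sub_smul, Finset.sum_sub_distrib]
        rw [sub_eq_zero]
        simpa [Algebra.smul_def] using hcc
      funext j
      have h := Fintype.linearIndependent_iff.mp hv2.1 _ hz j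
      rwa [sub_eq_zero] at h
    have hroot : ∀ x ∈ S, Polynomial.eval x f = 0 := by
      intro x hx
      rw [hS, Finset.mem_image] at hx
      obtain ⟨c, -, rfl⟩ := hx
      rw [heval]
      set A : Matrix (Fin (m+1)) (Fin (m+1)) K :=
        Matrix.of fun j k => v j ^ q ^ (k:ℕ) with hA
      set ctil : Fin (m+1) → K :=
        Fin.snoc (fun i : Fin m => algebraMap (GaloisField p n) K (c i)) 0 with hctil
      have hupd : (Matrix.of fun j k : Fin (m+1) =>
          (if j = Fin.last m then
            (∑ i, algebraMap (GaloisField p n) K (c i) * Fin.init v i) else v j) ^ q ^ (k:ℕ))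
          = A.updateRow (Fin.last m) (∑ j, ctil j • A j) := by
        ext j k
        by_cases hj : j = Fin.last m
        · subst hj
          rw [Matrix.updateRow_self]
          simp only [Matrix.of_apply, if_pos rfl, if_true]
          rw [hq, sum_alg_mul_pow p n hn]
          rw [Finset.sum_apply, Fin.sum_univ_castSucc]
          simp [hctil, hA, Fin.init]
          rfl
        · rw [Matrix.updateRow_ne hj]
          simp [hA, if_neg hj]
      rw [hupd, Matrix.det_updateRow_sum]
      have : ctil (Fin.last m) = 0 := by simp [hctil]
      rw [this, zero_smul]
    intro hdet
    have hvlS : v (Fin.last m) ∉ S := by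
      intro hmem
      apply hv2.2
      rw [hS, Finset.mem_image] at hmem
      obtain ⟨c, -, hc⟩ := hmem
      rw [← hc]
      exact Submodule.sum_mem _ fun j _ => by
        rw [← Algebra.smul_def]
        exact Submodule.smul_mem _ _ (Submodule.subset_span ⟨j, rfl⟩)
    have hvl_root : Polynomial.eval (v (Fin.last m)) f = 0 := by
      rw [heval]
      rw [← hdet]
      congr 1
      ext j k
      by_cases hj : j = Fin.last m <;> simp [hj]
    have hsub2 : insert (v (Fin.last m)) S ⊆ f.roots.toFinset := by
      intro x hx
      rw [Multiset.mem_toFinset, Polynomial.mem_roots hf0]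
      rcases Finset.mem_insert.mp hx with h | h
      · rw [h]; exact hvl_root
      · exact hroot x h
    have hcard2 : q ^ m + 1 ≤ (f.roots.toFinset).card := by
      calc q ^ m + 1 = (insert (v (Fin.last m)) S).card := by
            rw [Finset.card_insert_of_notMem hvlS, hScard]
        _ ≤ _ := Finset.card_le_card hsub2
    have hcard3 : (f.roots.toFinset).card ≤ q ^ m :=
      le_trans (Multiset.toFinset_card_le _) (le_trans (Polynomial.card_roots' f) hdeg)
    omega

end Moore2

section MainHelpers

variable {K : Type*} [Field K]

lemma prod_split' (d : ℕ) (y : Fin (d-1) → K) (N : ℕ) (hN : N < d - 1) :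
    (∏ s ∈ Finset.univ.filter (fun s : Fin (d-1) => (s:ℕ) < N+1), y s)
      = (∏ s ∈ Finset.univ.filter (fun s : Fin (d-1) => (s:ℕ) < N), y s) * y ⟨N, hN⟩ := by
  classical
  have hins : Finset.univ.filter (fun s : Fin (d-1) => (s:ℕ) < N+1)
      = insert ⟨N, hN⟩ (Finset.univ.filter (fun s : Fin (d-1) => (s:ℕ) < N)) := by
    ext s
    simp [Nat.lt_succ_iff_lt_or_eq, Fin.ext_iff, or_comm]
    constructor <;> intro h <;> omega
  rw [hins, Finset.prod_insert (by simp)]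
  ring

lemma li_mul (p n : ℕ) [Fact p.Prime] [Algebra (GaloisField p n) K] {d : ℕ}
    {w : Fin d → K} (hw : LinearIndependent (GaloisField p n) w) {a : K} (ha : a ≠ 0) :
    LinearIndependent (GaloisField p n) (fun j => a * w j) := by
  rw [Fintype.linearIndependent_iff] at hw ⊢
  intro g hg i
  refine hw g ?_ i
  have hmul : a * ∑ i, g i • w i = 0 := by
    rw [Finset.mul_sum, ← hg]
    apply Finset.sum_congr rfl
    intro j _
    rw [Algebra.smul_def, Algebra.smul_def]; ring
  rcases mul_eq_zero.mp hmul with h | h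
  · exact absurd h ha
  · exact h

lemma li_rep_of_li (p n : ℕ) [Fact p.Prime] [Algebra (GaloisField p n) K] {d : ℕ}
    (v : Fin d → K) (hv0 : v ≠ 0) (hli : LinearIndependent (GaloisField p n) v) :
    LinearIndependent (GaloisField p n) (Projectivization.mk K v hv0).rep := by
  obtain ⟨a, ha⟩ := (Projectivization.mk_eq_mk_iff K _ _ _ _).mp
    (Projectivization.mk_rep (Projectivization.mk K v hv0))
  rw [← ha]
  have hav : (a • v) = fun j => (a : K) * v j := by
    funext j
    simp [Units.smul_def]
  rw [hav]
  exact li_mul p n hli a.ne_zero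

lemma comp_ne_zero (p n d : ℕ) [Fact p.Prime] (hn : 0 < n) (hd : 0 < d)
    [CharP K p] [Algebra (GaloisField p n) K]
    (y : Fin (d-1) → K)
    (hy : (Matrix.det (Matrix.of fun j k : Fin d =>
          (∏ t ∈ Finset.univ.filter (fun t : Fin (d-1) => (t : ℕ) < (j : ℕ)), y t)
            ^ (p ^ n) ^ (k : ℕ))) ^ (p ^ n - 1) ≠ 0)
    (t : Fin (d-1)) : y t ≠ 0 := by
  have hq1 : 1 < p ^ n := Nat.one_lt_pow hn.ne' (Fact.out (p := p.Prime)).one_lt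
  have hdet : (Matrix.of fun j k : Fin d =>
      (∏ t ∈ Finset.univ.filter (fun t : Fin (d-1) => (t : ℕ) < (j : ℕ)), y t)
        ^ (p ^ n) ^ (k : ℕ)).det ≠ 0 := by
    intro h0
    exact hy (by rw [h0]; exact zero_pow (by omega))
  have hli := li_of_moore_det_ne_zero p n hn _ hdet
  have hlast := hli.ne_zero ⟨d-1, by omega⟩
  intro hyt
  exact hlast (Finset.prod_eq_zero (Finset.mem_filter.mpr ⟨Finset.mem_univ t, t.isLt⟩) hyt)

end MainHelpers



open scoped LinearAlgebra.Projectivization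

/-- **The affine chart of Drinfeld space.**  The map
`φ : (y_1,…,y_{d-1}) ↦ [1 : y_1 : y_1y_2 : ⋯ : y_1⋯y_{d-1}]` restricts to a bijection
from the open set `{δ_d(y) ≠ 0}` of affine space (where
`δ_d(y) = det((z_j^{q^k}))^{q-1}`, `z_j = y_1⋯y_j`) onto the Drinfeld space
`Ω^{d-1} ⊂ ℙ^{d-1}`, the set of points whose homogeneous coordinates are linearly
independent over `F_q`. -/
theorem affine_chart_bijOn_drinfeld
    (p n d : ℕ) [Fact p.Prime] (hn : 0 < n) (hd : 0 < d)
    (K : Type*) [Field K] [IsAlgClosed K] [CharP K p]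
    [Algebra (GaloisField p n) K] :
    Set.BijOn
      (fun y : Fin (d - 1) → K =>
        Projectivization.mk K
          (fun j : Fin d => ∏ t ∈ Finset.univ.filter (fun t : Fin (d-1) => (t : ℕ) < (j : ℕ)), y t)
          (by
            intro h
            have h0 := congrFun h ⟨0, hd⟩
            simp at h0))
      {y : Fin (d - 1) → K |
        (Matrix.det (Matrix.of fun j k : Fin d =>
          (∏ t ∈ Finset.univ.filter (fun t : Fin (d-1) => (t : ℕ) < (j : ℕ)), y t)
            ^ (p ^ n) ^ (k : ℕ))) ^ (p ^ n - 1) ≠ 0}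
      {P : ℙ K (Fin d → K) | LinearIndependent (GaloisField p n) P.rep} := by
  classical
  have hq1 : 1 < p ^ n := Nat.one_lt_pow hn.ne' (Fact.out (p := p.Prime)).one_lt
  refine ⟨?_, ?_, ?_⟩
  · -- MapsTo
    intro y hy
    simp only [Set.mem_setOf_eq] at hy ⊢
    have hdet : (Matrix.of fun j k : Fin d =>
        (∏ t ∈ Finset.univ.filter (fun t : Fin (d-1) => (t : ℕ) < (j : ℕ)), y t)
          ^ (p ^ n) ^ (k : ℕ)).det ≠ 0 := by
      intro h0
      exact hy (by rw [h0]; exact zero_pow (by omega))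
    exact li_rep_of_li p n _ _ (li_of_moore_det_ne_zero p n hn _ hdet)
  · -- InjOn
    intro y hy y' hy' heq
    simp only [Set.mem_setOf_eq] at hy hy'
    simp only at heq
    obtain ⟨a, ha⟩ := (Projectivization.mk_eq_mk_iff K _ _ _ _).mp heq
    have hv0 : ∀ (u : Fin (d-1) → K),
        (∏ t ∈ Finset.univ.filter
          (fun t : Fin (d-1) => (t:ℕ) < ((⟨0, hd⟩ : Fin d) : ℕ)), u t) = 1 := by
      intro u
      have h00 : ((⟨0, hd⟩ : Fin d) : ℕ) = 0 := rfl
      rw [h00]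
      simp
    have ha1 : (a : K) = 1 := by
      have h0 := congrFun ha ⟨0, hd⟩
      simp only [Pi.smul_apply, Units.smul_def, smul_eq_mul] at h0
      rw [hv0 y, hv0 y'] at h0
      simpa using h0
    have hzz : (fun j : Fin d => ∏ t ∈ Finset.univ.filter
          (fun t : Fin (d-1) => (t:ℕ) < (j:ℕ)), y' t)
        = (fun j : Fin d => ∏ t ∈ Finset.univ.filter
          (fun t : Fin (d-1) => (t:ℕ) < (j:ℕ)), y t) := by
      funext j
      have h1 := congrFun ha j
      simpa only [Pi.smul_apply, Units.smul_def, smul_eq_mul, ha1, one_mul] using h1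
    funext t
    have hN1 : (t:ℕ) + 1 < d := by omega
    have htd : (t:ℕ) < d := by omega
    have hs := congrFun hzz ⟨(t:ℕ)+1, hN1⟩
    have hc1 : ((⟨(t:ℕ)+1, hN1⟩ : Fin d) : ℕ) = (t:ℕ)+1 := rfl
    rw [hc1, prod_split' d y (t:ℕ) t.isLt, prod_split' d y' (t:ℕ) t.isLt] at hs
    have hA := congrFun hzz ⟨(t:ℕ), htd⟩
    have hc2 : ((⟨(t:ℕ), htd⟩ : Fin d) : ℕ) = (t:ℕ) := rfl
    rw [hc2] at hA
    rw [hA] at hs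
    have hAne : (∏ s ∈ Finset.univ.filter (fun s : Fin (d-1) => (s:ℕ) < (t:ℕ)), y s) ≠ 0 :=
      Finset.prod_ne_zero_iff.mpr fun s _ => comp_ne_zero p n d hn hd y hy s
    exact (mul_left_cancel₀ hAne hs).symm
  · -- SurjOn
    intro P hP
    simp only [Set.mem_setOf_eq] at hP
    set w := P.rep with hwdef
    have hwnz : ∀ j, w j ≠ 0 := fun j => hP.ne_zero j
    set y : Fin (d-1) → K :=
      fun t => w ⟨(t:ℕ)+1, by omega⟩ * (w ⟨(t:ℕ), by omega⟩)⁻¹ with hy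
    have hzw : ∀ (N : ℕ) (hN : N < d),
        (∏ t ∈ Finset.univ.filter (fun t : Fin (d-1) => (t:ℕ) < N), y t)
          = (w ⟨0, hd⟩)⁻¹ * w ⟨N, hN⟩ := by
      intro N
      induction N with
      | zero =>
        intro h0
        simp only [Nat.not_lt_zero, Finset.filter_false, Finset.prod_empty]
        exact (inv_mul_cancel₀ (hwnz ⟨0, hd⟩)).symm
      | succ N ihN =>
        intro hN1
        have hN : N < d := by omega
        have hNd1 : N < d - 1 := by omega
        calc (∏ t ∈ Finset.univ.filter (fun t : Fin (d-1) => (t:ℕ) < N+1), y t)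
            = (∏ t ∈ Finset.univ.filter (fun t : Fin (d-1) => (t:ℕ) < N), y t)
                * y ⟨N, hNd1⟩ := prod_split' d y N hNd1
          _ = ((w ⟨0, hd⟩)⁻¹ * w ⟨N, hN⟩) * (w ⟨N+1, hN1⟩ * (w ⟨N, hN⟩)⁻¹) := by
              rw [ihN hN]
          _ = (w ⟨0, hd⟩)⁻¹ * w ⟨N+1, hN1⟩ := by
              have h1 := hwnz ⟨N, hN⟩
              rw [mul_comm (w ⟨N+1, hN1⟩) (w ⟨N, hN⟩)⁻¹, ← mul_assoc,
                mul_assoc (w ⟨0, hd⟩)⁻¹, mul_inv_cancel₀ h1, mul_one]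
    have hzfun : (fun j : Fin d => ∏ t ∈ Finset.univ.filter
          (fun t : Fin (d-1) => (t:ℕ) < (j:ℕ)), y t)
        = fun j : Fin d => (w ⟨0, hd⟩)⁻¹ * w j := by
      funext j
      exact hzw (j:ℕ) j.isLt
    have hli : LinearIndependent (GaloisField p n) (fun j : Fin d => (w ⟨0, hd⟩)⁻¹ * w j) :=
      li_mul p n hP (inv_ne_zero (hwnz ⟨0, hd⟩))
    have hliz : LinearIndependent (GaloisField p n)
        (fun j : Fin d => ∏ t ∈ Finset.univ.filter
          (fun t : Fin (d-1) => (t:ℕ) < (j:ℕ)), y t) := by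
      rw [hzfun]; exact hli
    refine ⟨y, ?_, ?_⟩
    · simp only [Set.mem_setOf_eq]
      exact pow_ne_zero _ (moore_det_ne_zero_of_li p n hn d _ hliz)
    · simp only []
      conv_rhs => rw [← Projectivization.mk_rep P]
      rw [Projectivization.mk_eq_mk_iff]
      refine ⟨Units.mk0 ((w ⟨0, hd⟩)⁻¹) (inv_ne_zero (hwnz ⟨0, hd⟩)), ?_⟩
      funext j
      show (w ⟨0, hd⟩)⁻¹ * w j = _
      exact (congrFun hzfun j).symm
end
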